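/- arXiv:1701.04582 — 7 statements merged into one kernel-verified Lean document; each statement's English description precedes it below -/
import Mathlib

section
/- Let A be any bivariate copula and let μ be a probability measure on [0,1]² whose distribution function is A, i.e. μ([0,u]×[0,v]) = A(u,v) for all u,v ∈ [0,1]. Then [M,A] > [Π,A], i.e. ∫_{[0,1]²} min(u,v) dμ(u,v) > ∫_{[0,1]²} u·v dμ(u,v). -/
open MeasureTheory Set

/-- A bivariate copula on [0,1]², encoded as a function `ℝ → ℝ → ℝ` whose
defining properties are required on the unit square. -/
def IsCopula (C : ℝ → ℝ → ℝ) : Prop :=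
  (∀ u ∈ Icc (0:ℝ) 1, C u 0 = 0) ∧
  (∀ v ∈ Icc (0:ℝ) 1, C 0 v = 0) ∧
  (∀ u ∈ Icc (0:ℝ) 1, C u 1 = u) ∧
  (∀ v ∈ Icc (0:ℝ) 1, C 1 v = v) ∧
  (∀ u₁ u₂ v₁ v₂ : ℝ, u₁ ∈ Icc (0:ℝ) 1 → u₂ ∈ Icc (0:ℝ) 1 → v₁ ∈ Icc (0:ℝ) 1 →
    v₂ ∈ Icc (0:ℝ) 1 → u₁ ≤ u₂ → v₁ ≤ v₂ →
    0 ≤ C u₂ v₂ - C u₂ v₁ - C u₁ v₂ + C u₁ v₁) ∧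
  (∀ u ∈ Icc (0:ℝ) 1, ∀ v ∈ Icc (0:ℝ) 1, C u v ∈ Icc (0:ℝ) 1)

/-- Γ-invariance of a bivariate copula: invariance under the transposition and
the partial reflection ν₁. -/
def IsGammaInvariant (C : ℝ → ℝ → ℝ) : Prop :=
  ∀ u ∈ Icc (0:ℝ) 1, ∀ v ∈ Icc (0:ℝ) 1,
    C u v = C v u ∧ C u v = v - C (1 - u) v

/-- The unit square in ℝ². -/
def unitSquare : Set (ℝ × ℝ) := Icc (0:ℝ) 1 ×ˢ Icc (0:ℝ) 1

/-- `μ` is a measure on [0,1]² whose distribution function is `A`. -/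
def IsDistributionOf (μ : Measure (ℝ × ℝ)) (A : ℝ → ℝ → ℝ) : Prop :=
  ∀ u ∈ Icc (0:ℝ) 1, ∀ v ∈ Icc (0:ℝ) 1,
    μ (Icc (0:ℝ) u ×ˢ Icc (0:ℝ) v) = ENNReal.ofReal (A u v)

/-- The biconvex form `[C, A]` where `μ` is the measure associated with `A`. -/
noncomputable def biForm (μ : Measure (ℝ × ℝ)) (C : ℝ → ℝ → ℝ) : ℝ :=
  ∫ p in unitSquare, C p.1 p.2 ∂μ

lemma aux_zero (a : ENNReal) (h : ∀ t : ℝ, 0 ≤ t → t < 1 → a ≤ ENNReal.ofReal (1 - t)) :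
    a = 0 := by
  by_contra hne
  have ha1 : a ≤ 1 := by simpa using h 0 le_rfl one_pos
  have hfin : a ≠ ⊤ := ne_top_of_le_ne_top ENNReal.one_ne_top ha1
  have hc : 0 < a.toReal := ENNReal.toReal_pos hne hfin
  have hc1 : a.toReal ≤ 1 := by
    have := ENNReal.toReal_mono ENNReal.one_ne_top ha1
    simpa using this
  have ht : (0:ℝ) ≤ 1 - a.toReal / 2 := by linarith
  have h2 := h (1 - a.toReal / 2) ht (by linarith)
  rw [show (1 : ℝ) - (1 - a.toReal/2) = a.toReal/2 by ring] at h2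
  have hlt : ENNReal.ofReal (a.toReal/2) < a := by
    conv_rhs => rw [← ENNReal.ofReal_toReal hfin]
    exact (ENNReal.ofReal_lt_ofReal_iff (by linarith)).mpr (by linarith)
  exact absurd h2 (not_le.mpr hlt)

theorem stmt1 (A : ℝ → ℝ → ℝ) (μ : MeasureTheory.Measure (ℝ × ℝ))
    (hA : IsCopula A)
    (hμ : MeasureTheory.IsProbabilityMeasure μ) (hdist : IsDistributionOf μ A) :
    biForm μ (fun u v => min u v) > biForm μ (fun u v => u * v) := by
  obtain ⟨h1, h2, h3, h4, h5, h6⟩ := hA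
  have h01 : (0:ℝ) ∈ Icc (0:ℝ) 1 := ⟨le_rfl, zero_le_one⟩
  have h11 : (1:ℝ) ∈ Icc (0:ℝ) 1 := ⟨zero_le_one, le_rfl⟩
  have hsq_meas : MeasurableSet unitSquare := measurableSet_Icc.prod measurableSet_Icc
  have hsq : μ unitSquare = 1 := by
    have := hdist 1 h11 1 h11
    rw [h3 1 h11] at this
    simpa [unitSquare] using this
  set ν := μ.restrict unitSquare with hν
  have hν_univ : ν Set.univ = 1 := by
    rw [hν, Measure.restrict_apply_univ, hsq]
  -- marginal strips at 0 are null
  have hA01 : A 0 1 = 0 := h2 1 h11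
  have hA10 : A 1 0 = 0 := h1 1 h11
  have hx0 : ν {p : ℝ × ℝ | p.1 = 0} = 0 := by
    have hm : MeasurableSet {p : ℝ × ℝ | p.1 = 0} :=
      (measurable_fst (measurableSet_singleton (0:ℝ)))
    rw [hν, Measure.restrict_apply hm]
    have hset : {p : ℝ × ℝ | p.1 = 0} ∩ unitSquare = Icc (0:ℝ) 0 ×ˢ Icc (0:ℝ) 1 := by
      ext ⟨u, v⟩
      simp only [unitSquare, Set.mem_inter_iff, Set.mem_setOf_eq, Set.mem_prod, Set.mem_Icc]
      constructor
      · rintro ⟨rfl, ⟨_, _⟩, hv⟩; exact ⟨⟨le_rfl, le_rfl⟩, hv⟩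
      · rintro ⟨⟨hu0, hu1⟩, hv⟩
        have : u = 0 := le_antisymm hu1 hu0
        exact ⟨this, ⟨this ▸ le_rfl, this ▸ zero_le_one⟩, hv⟩
    rw [hset, hdist 0 h01 1 h11, hA01, ENNReal.ofReal_zero]
  have hy0 : ν {p : ℝ × ℝ | p.2 = 0} = 0 := by
    have hm : MeasurableSet {p : ℝ × ℝ | p.2 = 0} :=
      (measurable_snd (measurableSet_singleton (0:ℝ)))
    rw [hν, Measure.restrict_apply hm]
    have hset : {p : ℝ × ℝ | p.2 = 0} ∩ unitSquare = Icc (0:ℝ) 1 ×ˢ Icc (0:ℝ) 0 := by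
      ext ⟨u, v⟩
      simp only [unitSquare, Set.mem_inter_iff, Set.mem_setOf_eq, Set.mem_prod, Set.mem_Icc]
      constructor
      · rintro ⟨rfl, hu, ⟨_, _⟩⟩; exact ⟨hu, le_rfl, le_rfl⟩
      · rintro ⟨hu, hv0, hv1⟩
        have : v = 0 := le_antisymm hv1 hv0
        exact ⟨this, hu, this ▸ le_rfl, this ▸ zero_le_one⟩
    rw [hset, hdist 1 h11 0 h01, hA10, ENNReal.ofReal_zero]
  -- marginal strips at 1 are null
  have hAt1 : ∀ t : ℝ, 0 ≤ t → t ≤ 1 → A t 1 = t := fun t ht ht1 => h3 t ⟨ht, ht1⟩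
  have hA1t : ∀ t : ℝ, 0 ≤ t → t ≤ 1 → A 1 t = t := fun t ht ht1 => h4 t ⟨ht, ht1⟩
  have hstrip1 : ∀ (S : Set (ℝ × ℝ)) (B : ℝ → Set (ℝ × ℝ)),
      (∀ t : ℝ, 0 ≤ t → t < 1 → S ∩ unitSquare ⊆ unitSquare \ B t) →
      (∀ t : ℝ, 0 ≤ t → t < 1 → MeasurableSet (B t)) →
      (∀ t : ℝ, 0 ≤ t → t < 1 → B t ⊆ unitSquare) →
      (∀ t : ℝ, 0 ≤ t → t < 1 → μ (B t) = ENNReal.ofReal t) →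
      MeasurableSet S → ν S = 0 := by
    intro S B hsub hBm hBsub hBμ hSm
    apply aux_zero
    intro t ht ht1
    rw [hν, Measure.restrict_apply hSm]
    calc μ (S ∩ unitSquare) ≤ μ (unitSquare \ B t) := measure_mono (hsub t ht ht1)
      _ = μ unitSquare - μ (B t) := by
          exact measure_diff (hBsub t ht ht1) ((hBm t ht ht1).nullMeasurableSet)
            (by rw [hBμ t ht ht1]; exact ENNReal.ofReal_ne_top)
      _ = ENNReal.ofReal (1 - t) := by
          rw [hsq, hBμ t ht ht1, ← ENNReal.ofReal_one, ← ENNReal.ofReal_sub _ ht]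
  have hx1 : ν {p : ℝ × ℝ | p.1 = 1} = 0 := by
    apply hstrip1 _ (fun t => Icc (0:ℝ) t ×ˢ Icc (0:ℝ) 1)
    · rintro t ht ht1 ⟨u, v⟩ ⟨hu1, husq⟩
      refine ⟨husq, fun hmem => ?_⟩
      rcases hmem with ⟨⟨_, hut⟩, _⟩
      simp only [Set.mem_setOf_eq] at hu1
      have huT : u ≤ t := hut
      rw [hu1] at huT; linarith
    · intro t _ _; exact measurableSet_Icc.prod measurableSet_Icc
    · intro t ht ht1
      exact Set.prod_mono (Set.Icc_subset_Icc le_rfl ht1.le) subset_rfl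
    · intro t ht ht1
      rw [hdist t ⟨ht, ht1.le⟩ 1 h11, hAt1 t ht ht1.le]
    · exact measurable_fst (measurableSet_singleton (1:ℝ))
  have hy1 : ν {p : ℝ × ℝ | p.2 = 1} = 0 := by
    apply hstrip1 _ (fun t => Icc (0:ℝ) 1 ×ˢ Icc (0:ℝ) t)
    · rintro t ht ht1 ⟨u, v⟩ ⟨hv1, husq⟩
      refine ⟨husq, fun hmem => ?_⟩
      rcases hmem with ⟨_, ⟨_, hvt⟩⟩
      simp only [Set.mem_setOf_eq] at hv1
      have hvT : v ≤ t := hvt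
      rw [hv1] at hvT; linarith
    · intro t _ _; exact measurableSet_Icc.prod measurableSet_Icc
    · intro t ht ht1
      exact Set.prod_mono subset_rfl (Set.Icc_subset_Icc le_rfl ht1.le)
    · intro t ht ht1
      rw [hdist 1 h11 t ⟨ht, ht1.le⟩, hA1t t ht ht1.le]
    · exact measurable_snd (measurableSet_singleton (1:ℝ))
  -- the complement of the square is ν-null
  have hcompl : ν unitSquareᶜ = 0 := by
    rw [hν, Measure.restrict_apply hsq_meas.compl]
    simp
  -- the integrand
  set f : ℝ × ℝ → ℝ := fun p => min p.1 p.2 - p.1 * p.2 with hf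
  have hf_cont : Continuous f :=
    (continuous_fst.min continuous_snd).sub (continuous_fst.mul continuous_snd)
  have hcompact : IsCompact unitSquare := isCompact_Icc.prod isCompact_Icc
  have hint_min : IntegrableOn (fun p : ℝ × ℝ => min p.1 p.2) unitSquare μ :=
    (continuous_fst.min continuous_snd).continuousOn.integrableOn_compact hcompact
  have hint_mul : IntegrableOn (fun p : ℝ × ℝ => p.1 * p.2) unitSquare μ :=
    (continuous_fst.mul continuous_snd).continuousOn.integrableOn_compact hcompact
  have hint_f : Integrable f ν := hint_min.sub hint_mul
  -- nonnegativity a.e.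
  have hnonneg_sq : ∀ p ∈ unitSquare, 0 ≤ f p := by
    rintro ⟨u, v⟩ ⟨⟨hu0, hu1⟩, hv0, hv1⟩
    simp only [hf]
    rcases le_total u v with h | h
    · rw [min_eq_left h]; nlinarith
    · rw [min_eq_right h]; nlinarith
  have hae : 0 ≤ᵐ[ν] f := by
    filter_upwards [ae_restrict_mem hsq_meas] with p hp
    exact hnonneg_sq p hp
  -- the zero set of f is ν-null
  have hzero_sub : {p : ℝ × ℝ | f p = 0} ⊆
      {p : ℝ × ℝ | p.1 = 0} ∪ {p : ℝ × ℝ | p.2 = 0} ∪ {p : ℝ × ℝ | p.1 = 1} ∪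
        {p : ℝ × ℝ | p.2 = 1} ∪ unitSquareᶜ := by
    rintro ⟨u, v⟩ hp
    simp only [Set.mem_setOf_eq, hf] at hp
    by_cases hsqm : (u, v) ∈ unitSquare
    · obtain ⟨⟨hu0, hu1⟩, hv0, hv1⟩ := hsqm
      by_contra hcon
      simp only [Set.mem_union, Set.mem_setOf_eq, Set.mem_compl_iff, not_or] at hcon
      obtain ⟨⟨⟨⟨hu0', hv0'⟩, hu1'⟩, hv1'⟩, _⟩ := hcon
      have hu0'' : 0 < u := lt_of_le_of_ne hu0 (Ne.symm hu0')
      have hv0'' : 0 < v := lt_of_le_of_ne hv0 (Ne.symm hv0')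
      have hu1'' : u < 1 := lt_of_le_of_ne hu1 hu1'
      have hv1'' : v < 1 := lt_of_le_of_ne hv1 hv1'
      rcases le_total u v with h | h
      · rw [min_eq_left h] at hp; nlinarith
      · rw [min_eq_right h] at hp; nlinarith
    · right; exact hsqm
  have hzero_null : ν {p : ℝ × ℝ | f p = 0} = 0 := by
    refine measure_mono_null hzero_sub ?_
    refine measure_union_null (measure_union_null (measure_union_null
      (measure_union_null hx0 hy0) hx1) hy1) hcompl
  -- support has full measure
  have hzero_meas : MeasurableSet {p : ℝ × ℝ | f p = 0} :=
    hf_cont.measurable (measurableSet_singleton (0:ℝ))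
  have hsupp : ν (Function.support f) = 1 := by
    have : Function.support f = {p : ℝ × ℝ | f p = 0}ᶜ := by
      ext p; simp [Function.mem_support]
    rw [this, measure_compl hzero_meas (by rw [hzero_null]; exact ENNReal.zero_ne_top),
      hzero_null, hν_univ]
    simp
  -- conclude
  have hpos : 0 < ∫ p, f p ∂ν := by
    rw [integral_pos_iff_support_of_nonneg_ae hae hint_f, hsupp]
    exact one_pos
  have hsub_int : ∫ p, f p ∂ν =
      (∫ p in unitSquare, min p.1 p.2 ∂μ) - ∫ p in unitSquare, p.1 * p.2 ∂μ := by
    exact integral_sub hint_min hint_mul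
  simp only [biForm, gt_iff_lt]
  linarith [hpos, hsub_int.symm ▸ hpos]
end

section
/- Let A be a Γ-invariant bivariate copula and let μ be a probability measure on [0,1]² whose distribution function is A. Define κ_A[C] := ([C,A] − 1/4)/([M,A] − 1/4) for every copula C, where [C,A] := ∫_{[0,1]²} C dμ (the denominator [M,A] − 1/4 is strictly positive). Then κ_A is a (bivariate) measure of concordance: (i) κ_A[M] = 1; (ii) κ_A[π(C)] = κ_A[C] for every copula C, where (π(C))(u,v) := C(v,u); (iii) κ_A[ν₁(C)] = −κ_A[C] for every copula C, where (ν₁(C))(u,v) := v − C(1−u,v). -/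
open MeasureTheory Set

noncomputable def cl (x : ℝ) : ℝ := max 0 (min x 1)

lemma cl_mem (x : ℝ) : cl x ∈ Icc (0:ℝ) 1 :=
  ⟨le_max_left _ _, max_le (by norm_num) (min_le_right _ _)⟩

lemma cl_of_mem {x : ℝ} (hx : x ∈ Icc (0:ℝ) 1) : cl x = x := by
  simp [cl, min_eq_left hx.2, max_eq_right hx.1]

lemma continuous_cl : Continuous cl :=
  continuous_const.max (continuous_id.min continuous_const)

lemma cl_one_sub (a : ℝ) : cl (1 - a) = 1 - cl a := by
  unfold cl
  simp only [max_def, min_def]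
  split_ifs <;> linarith

namespace IsCopula

variable {C : ℝ → ℝ → ℝ}

lemma mem01 (h : IsCopula C) {u v : ℝ} (hu : u ∈ Icc (0:ℝ) 1) (hv : v ∈ Icc (0:ℝ) 1) :
    C u v ∈ Icc (0:ℝ) 1 := h.2.2.2.2.2 u hu v hv

-- first-variable monotonicity and Lipschitz
lemma diff1 (h : IsCopula C) {u₁ u₂ v : ℝ} (hu₁ : u₁ ∈ Icc (0:ℝ) 1) (hu₂ : u₂ ∈ Icc (0:ℝ) 1)
    (hv : v ∈ Icc (0:ℝ) 1) (h12 : u₁ ≤ u₂) :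
    C u₁ v ≤ C u₂ v ∧ C u₂ v - C u₁ v ≤ u₂ - u₁ := by
  have h0 : (0:ℝ) ∈ Icc (0:ℝ) 1 := by norm_num
  have h1 : (1:ℝ) ∈ Icc (0:ℝ) 1 := by norm_num
  constructor
  · have := h.2.2.2.2.1 u₁ u₂ 0 v hu₁ hu₂ h0 hv h12 hv.1
    rw [h.1 u₁ hu₁, h.1 u₂ hu₂] at this; linarith
  · have := h.2.2.2.2.1 u₁ u₂ v 1 hu₁ hu₂ hv h1 h12 hv.2
    rw [h.2.2.1 u₁ hu₁, h.2.2.1 u₂ hu₂] at this; linarith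

lemma diff2 (h : IsCopula C) {u v₁ v₂ : ℝ} (hu : u ∈ Icc (0:ℝ) 1) (hv₁ : v₁ ∈ Icc (0:ℝ) 1)
    (hv₂ : v₂ ∈ Icc (0:ℝ) 1) (h12 : v₁ ≤ v₂) :
    C u v₁ ≤ C u v₂ ∧ C u v₂ - C u v₁ ≤ v₂ - v₁ := by
  have h0 : (0:ℝ) ∈ Icc (0:ℝ) 1 := by norm_num
  have h1 : (1:ℝ) ∈ Icc (0:ℝ) 1 := by norm_num
  constructor
  · have := h.2.2.2.2.1 0 u v₁ v₂ h0 hu hv₁ hv₂ hu.1 h12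
    rw [h.2.1 v₁ hv₁, h.2.1 v₂ hv₂] at this; linarith
  · have := h.2.2.2.2.1 u 1 v₁ v₂ hu h1 hv₁ hv₂ hu.2 h12
    rw [h.2.2.2.1 v₁ hv₁, h.2.2.2.1 v₂ hv₂] at this; linarith

lemma le_right (h : IsCopula C) {u v : ℝ} (hu : u ∈ Icc (0:ℝ) 1) (hv : v ∈ Icc (0:ℝ) 1) :
    C u v ≤ v := by
  have h1 : (1:ℝ) ∈ Icc (0:ℝ) 1 := by norm_num
  have := (h.diff1 hu h1 hv hu.2).1
  rwa [h.2.2.2.1 v hv] at this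

lemma le_left (h : IsCopula C) {u v : ℝ} (hu : u ∈ Icc (0:ℝ) 1) (hv : v ∈ Icc (0:ℝ) 1) :
    C u v ≤ u := by
  have h1 : (1:ℝ) ∈ Icc (0:ℝ) 1 := by norm_num
  have := (h.diff2 hu hv h1 hv.2).1
  rwa [h.2.2.1 u hu] at this

lemma frechet (h : IsCopula C) {u v : ℝ} (hu : u ∈ Icc (0:ℝ) 1) (hv : v ∈ Icc (0:ℝ) 1) :
    u + v - 1 ≤ C u v := by
  have h1 : (1:ℝ) ∈ Icc (0:ℝ) 1 := by norm_num
  have := (h.diff1 hu h1 hv hu.2).2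
  rw [h.2.2.2.1 v hv] at this; linarith

lemma abs_diff_le (h : IsCopula C) {u u' v v' : ℝ} (hu : u ∈ Icc (0:ℝ) 1) (hu' : u' ∈ Icc (0:ℝ) 1)
    (hv : v ∈ Icc (0:ℝ) 1) (hv' : v' ∈ Icc (0:ℝ) 1) :
    |C u v - C u' v'| ≤ |u - u'| + |v - v'| := by
  have key : ∀ a b : ℝ, a ∈ Icc (0:ℝ) 1 → b ∈ Icc (0:ℝ) 1 → ∀ c, c ∈ Icc (0:ℝ) 1 →
      |C a c - C b c| ≤ |a - b| := by
    intro a b ha hb c hc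
    rcases le_total b a with hba | hab
    · have := h.diff1 hb ha hc hba
      rw [abs_of_nonneg (by linarith [this.1] : (0:ℝ) ≤ C a c - C b c),
        abs_of_nonneg (by linarith : (0:ℝ) ≤ a - b)]
      exact this.2
    · have := h.diff1 ha hb hc hab
      rw [abs_sub_comm (C a c), abs_sub_comm a b,
        abs_of_nonneg (by linarith [this.1] : (0:ℝ) ≤ C b c - C a c),
        abs_of_nonneg (by linarith : (0:ℝ) ≤ b - a)]
      exact this.2
  have key2 : ∀ c d : ℝ, c ∈ Icc (0:ℝ) 1 → d ∈ Icc (0:ℝ) 1 →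
      |C u' c - C u' d| ≤ |c - d| := by
    intro c d hc hd
    rcases le_total d c with hdc | hcd
    · have := h.diff2 hu' hd hc hdc
      rw [abs_of_nonneg (by linarith [this.1] : (0:ℝ) ≤ C u' c - C u' d),
        abs_of_nonneg (by linarith : (0:ℝ) ≤ c - d)]
      exact this.2
    · have := h.diff2 hu' hc hd hcd
      rw [abs_sub_comm (C u' c), abs_sub_comm c d,
        abs_of_nonneg (by linarith [this.1] : (0:ℝ) ≤ C u' d - C u' c),
        abs_of_nonneg (by linarith : (0:ℝ) ≤ d - c)]
      exact this.2
  calc |C u v - C u' v'| ≤ |C u v - C u' v| + |C u' v - C u' v'| := abs_sub_le _ _ _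
  _ ≤ |u - u'| + |v - v'| := add_le_add (key u u' hu hu' v hv) (key2 v v' hv hv')

end IsCopula




/-- clamped version of a copula, defined on all of ℝ². -/
noncomputable def CL (C : ℝ → ℝ → ℝ) : ℝ × ℝ → ℝ := fun p => C (cl p.1) (cl p.2)

lemma measurableSet_unitSquare : MeasurableSet unitSquare :=
  measurableSet_Icc.prod measurableSet_Icc

lemma IsCopula.continuousOn {C : ℝ → ℝ → ℝ} (h : IsCopula C) :
    ContinuousOn (fun p : ℝ × ℝ => C p.1 p.2) unitSquare := by
  have : LipschitzOnWith 2 (fun p : ℝ × ℝ => C p.1 p.2) unitSquare := by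
    apply LipschitzOnWith.of_dist_le_mul
    intro x hx y hy
    have hb := h.abs_diff_le hx.1 hy.1 hx.2 hy.2
    rw [Real.dist_eq]
    calc |C x.1 x.2 - C y.1 y.2| ≤ |x.1 - y.1| + |x.2 - y.2| := hb
    _ ≤ dist x y + dist x y := by
        rw [Prod.dist_eq]
        exact add_le_add (le_trans (le_of_eq (Real.dist_eq _ _).symm) (le_max_left _ _))
          (le_trans (le_of_eq (Real.dist_eq _ _).symm) (le_max_right _ _))
    _ = 2 * dist x y := by push_cast; ring
  exact this.continuousOn

lemma IsCopula.continuous_CL {C : ℝ → ℝ → ℝ} (h : IsCopula C) : Continuous (CL C) := by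
  have hmaps : ∀ p : ℝ × ℝ, (cl p.1, cl p.2) ∈ unitSquare := fun p => ⟨cl_mem _, cl_mem _⟩
  exact h.continuousOn.comp_continuous
    ((continuous_cl.comp continuous_fst).prodMk (continuous_cl.comp continuous_snd)) hmaps

lemma IsCopula.CL_mem {C : ℝ → ℝ → ℝ} (h : IsCopula C) (p : ℝ × ℝ) :
    CL C p ∈ Icc (0:ℝ) 1 := h.mem01 (cl_mem _) (cl_mem _)

lemma IsCopula.integrable_CL {C : ℝ → ℝ → ℝ} (h : IsCopula C) (ν : Measure (ℝ × ℝ))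
    [IsFiniteMeasure ν] : Integrable (CL C) ν := by
  refine ⟨h.continuous_CL.aestronglyMeasurable, ?_⟩
  apply HasFiniteIntegral.of_bounded (C := 1)
  filter_upwards with p
  rw [Real.norm_eq_abs, abs_le]
  exact ⟨by linarith [(h.CL_mem p).1], (h.CL_mem p).2⟩

lemma isCopula_min : IsCopula (fun u v => min u v) := by
  refine ⟨?_, ?_, ?_, ?_, ?_, ?_⟩
  · intro u hu; exact min_eq_right hu.1
  · intro v hv; exact min_eq_left hv.1
  · intro u hu; exact min_eq_left hu.2
  · intro v hv; exact min_eq_right hv.2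
  · intro u₁ u₂ v₁ v₂ _ _ _ _ h12 h34
    simp only [min_def]; split_ifs <;> linarith
  · intro u hu v hv
    constructor
    · exact le_min hu.1 hv.1
    · exact min_le_of_left_le hu.2

section Meas

variable {A : ℝ → ℝ → ℝ} {μ : Measure (ℝ × ℝ)}

lemma Iic_inter_Icc01_of_neg {a : ℝ} (ha : a < 0) : Iic a ∩ Icc (0:ℝ) 1 = ∅ := by
  ext x; simp only [mem_inter_iff, mem_Iic, mem_Icc, mem_empty_iff_false, iff_false]
  rintro ⟨h1, h2, _⟩; linarith

lemma Iic_inter_Icc01_of_nonneg {a : ℝ} (ha : 0 ≤ a) :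
    Iic a ∩ Icc (0:ℝ) 1 = Icc 0 (min a 1) := by
  ext x
  simp only [mem_inter_iff, mem_Iic, mem_Icc, le_min_iff]
  constructor
  · rintro ⟨h1, h2, h3⟩; exact ⟨h2, h1, h3⟩
  · rintro ⟨h1, h2, h3⟩; exact ⟨h2, h1, h3⟩

lemma cl_of_neg {a : ℝ} (ha : a < 0) : cl a = 0 := by
  unfold cl; rw [min_eq_left (by linarith), max_eq_left ha.le]

lemma cl_of_nonneg {a : ℝ} (ha : 0 ≤ a) : cl a = min a 1 := by
  unfold cl; rw [max_eq_right (le_min ha zero_le_one)]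

lemma nu_Iic (hA : IsCopula A) (hdist : IsDistributionOf μ A) (a b : ℝ) :
    (μ.restrict unitSquare) (Iic a ×ˢ Iic b) = ENNReal.ofReal (A (cl a) (cl b)) := by
  rw [Measure.restrict_apply (measurableSet_Iic.prod measurableSet_Iic)]
  rw [unitSquare, prod_inter_prod]
  rcases lt_or_ge a 0 with ha | ha
  · rw [Iic_inter_Icc01_of_neg ha, empty_prod, measure_empty, cl_of_neg ha,
      hA.2.1 _ (cl_mem b), ENNReal.ofReal_zero]
  · rcases lt_or_ge b 0 with hb | hb
    · rw [Iic_inter_Icc01_of_neg hb, prod_empty, measure_empty, cl_of_neg hb,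
        hA.1 _ (cl_mem a), ENNReal.ofReal_zero]
    · rw [Iic_inter_Icc01_of_nonneg ha, Iic_inter_Icc01_of_nonneg hb,
        cl_of_nonneg ha, cl_of_nonneg hb]
      exact hdist (min a 1) ⟨le_min ha zero_le_one, min_le_right _ _⟩
        (min b 1) ⟨le_min hb zero_le_one, min_le_right _ _⟩

lemma nu_univ (hA : IsCopula A) (hdist : IsDistributionOf μ A) :
    (μ.restrict unitSquare) univ = 1 := by
  rw [Measure.restrict_apply_univ, unitSquare]
  have h1 : (1:ℝ) ∈ Icc (0:ℝ) 1 := by norm_num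
  rw [hdist 1 h1 1 h1, hA.2.2.1 1 h1, ENNReal.ofReal_one]

end Meas

section Meas2

variable {A : ℝ → ℝ → ℝ} {μ : Measure (ℝ × ℝ)}

lemma nu_prob (hA : IsCopula A) (hdist : IsDistributionOf μ A) :
    IsProbabilityMeasure (μ.restrict unitSquare) := ⟨nu_univ hA hdist⟩

lemma nu_fst (hA : IsCopula A) (hdist : IsDistributionOf μ A) (a : ℝ) :
    (μ.restrict unitSquare) (Iic a ×ˢ (univ : Set ℝ)) = ENNReal.ofReal (cl a) := by
  have : (μ.restrict unitSquare) (Iic a ×ˢ (univ : Set ℝ))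
      = (μ.restrict unitSquare) (Iic a ×ˢ Iic 1) := by
    rw [Measure.restrict_apply (measurableSet_Iic.prod MeasurableSet.univ),
      Measure.restrict_apply (measurableSet_Iic.prod measurableSet_Iic)]
    congr 1
    rw [unitSquare, prod_inter_prod, prod_inter_prod, univ_inter]
    congr 1
    ext x
    simp only [mem_inter_iff, mem_Iic, mem_Icc]
    tauto
  rw [this, nu_Iic hA hdist, cl_of_mem (by norm_num : (1:ℝ) ∈ Icc (0:ℝ) 1),
    hA.2.2.1 _ (cl_mem a)]

lemma nu_snd (hA : IsCopula A) (hdist : IsDistributionOf μ A) (b : ℝ) :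
    (μ.restrict unitSquare) ((univ : Set ℝ) ×ˢ Iic b) = ENNReal.ofReal (cl b) := by
  have : (μ.restrict unitSquare) ((univ : Set ℝ) ×ˢ Iic b)
      = (μ.restrict unitSquare) (Iic 1 ×ˢ Iic b) := by
    rw [Measure.restrict_apply (MeasurableSet.univ.prod measurableSet_Iic),
      Measure.restrict_apply (measurableSet_Iic.prod measurableSet_Iic)]
    congr 1
    rw [unitSquare, prod_inter_prod, prod_inter_prod, univ_inter]
    congr 1
    ext x
    simp only [mem_inter_iff, mem_Iic, mem_Icc]
    tauto
  rw [this, nu_Iic hA hdist, cl_of_mem (by norm_num : (1:ℝ) ∈ Icc (0:ℝ) 1),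
    hA.2.2.2.1 _ (cl_mem b)]

lemma map_fst_nu (hA : IsCopula A) (hdist : IsDistributionOf μ A) :
    Measure.map Prod.fst (μ.restrict unitSquare) = volume.restrict (Icc (0:ℝ) 1) := by
  haveI := nu_prob hA hdist
  haveI : IsProbabilityMeasure (Measure.map Prod.fst (μ.restrict unitSquare)) :=
    Measure.isProbabilityMeasure_map measurable_fst.aemeasurable
  refine Measure.ext_of_Iic _ _ (fun a => ?_)
  rw [Measure.map_apply measurable_fst measurableSet_Iic, ← prod_univ,
    nu_fst hA hdist, Measure.restrict_apply measurableSet_Iic]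
  rcases lt_or_ge a 0 with ha | ha
  · rw [Iic_inter_Icc01_of_neg ha, measure_empty, cl_of_neg ha, ENNReal.ofReal_zero]
  · rw [Iic_inter_Icc01_of_nonneg ha, Real.volume_Icc, cl_of_nonneg ha, sub_zero]

lemma map_snd_nu (hA : IsCopula A) (hdist : IsDistributionOf μ A) :
    Measure.map Prod.snd (μ.restrict unitSquare) = volume.restrict (Icc (0:ℝ) 1) := by
  haveI := nu_prob hA hdist
  haveI : IsProbabilityMeasure (Measure.map Prod.snd (μ.restrict unitSquare)) :=
    Measure.isProbabilityMeasure_map measurable_snd.aemeasurable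
  refine Measure.ext_of_Iic _ _ (fun b => ?_)
  rw [Measure.map_apply measurable_snd measurableSet_Iic, ← univ_prod,
    nu_snd hA hdist, Measure.restrict_apply measurableSet_Iic]
  rcases lt_or_ge b 0 with hb | hb
  · rw [Iic_inter_Icc01_of_neg hb, measure_empty, cl_of_neg hb, ENNReal.ofReal_zero]
  · rw [Iic_inter_Icc01_of_nonneg hb, Real.volume_Icc, cl_of_nonneg hb, sub_zero]

lemma line_fst (hA : IsCopula A) (hdist : IsDistributionOf μ A) (c : ℝ) :
    (μ.restrict unitSquare) ({c} ×ˢ (univ : Set ℝ)) = 0 := by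
  have : ({c} ×ˢ (univ : Set ℝ)) = Prod.fst ⁻¹' {c} := by
    ext p
    simp only [mem_prod, mem_singleton_iff, mem_univ, and_true, mem_preimage]
  rw [this, ← Measure.map_apply measurable_fst (measurableSet_singleton c),
    map_fst_nu hA hdist, Measure.restrict_apply (measurableSet_singleton c)]
  exact measure_mono_null inter_subset_left Real.volume_singleton

end Meas2


section Meas3

variable {A : ℝ → ℝ → ℝ} {μ : Measure (ℝ × ℝ)}

lemma ext_Iic_prod {ρ₁ ρ₂ : Measure (ℝ × ℝ)} [IsFiniteMeasure ρ₁]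
    (h : ∀ a b : ℝ, ρ₁ (Iic a ×ˢ Iic b) = ρ₂ (Iic a ×ˢ Iic b))
    (huniv : ρ₁ univ = ρ₂ univ) : ρ₁ = ρ₂ := by
  have hspan : IsCountablySpanning (range (Iic : ℝ → Set ℝ)) := by
    refine ⟨fun n => Iic (n : ℝ), fun n => mem_range_self _, ?_⟩
    ext x
    simp only [mem_iUnion, mem_Iic, mem_univ, iff_true]
    obtain ⟨n, hn⟩ := exists_nat_ge x
    exact ⟨n, hn⟩
  have hgen : (inferInstance : MeasurableSpace (ℝ × ℝ)) =
      MeasurableSpace.generateFrom (image2 (· ×ˢ ·) (range (Iic : ℝ → Set ℝ))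
        (range (Iic : ℝ → Set ℝ))) :=
    (generateFrom_eq_prod (BorelSpace.measurable_eq.trans (borel_eq_generateFrom_Iic ℝ)).symm
      (BorelSpace.measurable_eq.trans (borel_eq_generateFrom_Iic ℝ)).symm hspan hspan).symm
  refine ext_of_generate_finite _ hgen (isPiSystem_Iic.prod isPiSystem_Iic) ?_ huniv
  rintro s ⟨_, ⟨a, rfl⟩, _, ⟨b, rfl⟩, rfl⟩
  exact h a b

lemma nu_swap (hA : IsCopula A) (hinv : IsGammaInvariant A) (hdist : IsDistributionOf μ A) :
    Measure.map Prod.swap (μ.restrict unitSquare) = μ.restrict unitSquare := by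
  haveI := nu_prob hA hdist
  haveI : IsProbabilityMeasure (Measure.map Prod.swap (μ.restrict unitSquare)) :=
    Measure.isProbabilityMeasure_map measurable_swap.aemeasurable
  refine ext_Iic_prod (fun a b => ?_) (by simp [measure_univ])
  rw [Measure.map_apply measurable_swap (measurableSet_Iic.prod measurableSet_Iic),
    preimage_swap_prod, nu_Iic hA hdist, nu_Iic hA hdist,
    (hinv _ (cl_mem b) _ (cl_mem a)).1]

lemma nu_refl (hA : IsCopula A) (hinv : IsGammaInvariant A) (hdist : IsDistributionOf μ A) :
    Measure.map (fun p : ℝ × ℝ => (1 - p.1, p.2)) (μ.restrict unitSquare)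
      = μ.restrict unitSquare := by
  haveI := nu_prob hA hdist
  have hr : Measurable (fun p : ℝ × ℝ => (1 - p.1, p.2)) :=
    (measurable_const.sub measurable_fst).prodMk measurable_snd
  haveI : IsProbabilityMeasure
      (Measure.map (fun p : ℝ × ℝ => (1 - p.1, p.2)) (μ.restrict unitSquare)) :=
    Measure.isProbabilityMeasure_map hr.aemeasurable
  refine ext_Iic_prod (fun a b => ?_) (by simp [measure_univ])
  rw [Measure.map_apply hr (measurableSet_Iic.prod measurableSet_Iic)]
  have hpre : (fun p : ℝ × ℝ => (1 - p.1, p.2)) ⁻¹' (Iic a ×ˢ Iic b)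
      = Ici (1 - a) ×ˢ Iic b := by
    ext p
    simp only [mem_preimage, mem_prod, mem_Iic, mem_Ici]
    constructor <;> rintro ⟨h1, h2⟩ <;> exact ⟨by linarith, h2⟩
  rw [hpre]
  have hdiff : Ici (1 - a) ×ˢ Iic b
      = ((univ : Set ℝ) ×ˢ Iic b) \ (Iio (1 - a) ×ˢ Iic b) := by
    ext p
    simp only [mem_diff, mem_prod, mem_univ, true_and, mem_Ici, mem_Iic, mem_Iio]
    constructor
    · rintro ⟨h1, h2⟩
      exact ⟨h2, fun hc => absurd hc.1 (not_lt.mpr h1)⟩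
    · rintro ⟨h2, hn⟩
      exact ⟨not_lt.mp fun hlt => hn ⟨hlt, h2⟩, h2⟩
  have hIio : (μ.restrict unitSquare) (Iio (1 - a) ×ˢ Iic b)
      = (μ.restrict unitSquare) (Iic (1 - a) ×ˢ Iic b) := by
    refine le_antisymm (measure_mono (prod_mono_left Iio_subset_Iic_self)) ?_
    calc (μ.restrict unitSquare) (Iic (1 - a) ×ˢ Iic b)
        ≤ (μ.restrict unitSquare) ((Iio (1 - a) ×ˢ Iic b) ∪ ({1 - a} ×ˢ (univ : Set ℝ))) := by
          refine measure_mono ?_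
          rintro p ⟨h1, h2⟩
          rcases lt_or_eq_of_le (mem_Iic.mp h1) with h1' | h1'
          · exact Or.inl (mem_prod.mpr ⟨mem_Iio.mpr h1', h2⟩)
          · exact Or.inr (mem_prod.mpr ⟨mem_singleton_iff.mpr h1', mem_univ _⟩)
      _ ≤ (μ.restrict unitSquare) (Iio (1 - a) ×ˢ Iic b)
          + (μ.restrict unitSquare) ({1 - a} ×ˢ (univ : Set ℝ)) := measure_union_le _ _
      _ = (μ.restrict unitSquare) (Iio (1 - a) ×ˢ Iic b) := by
          rw [line_fst hA hdist, add_zero]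
  rw [hdiff, measure_diff (prod_mono_left (subset_univ _))
    ((measurableSet_Iio.prod measurableSet_Iic).nullMeasurableSet) (measure_ne_top _ _),
    nu_snd hA hdist, hIio, nu_Iic hA hdist, cl_one_sub]
  have hg := (hinv _ (cl_mem a) _ (cl_mem b)).2
  have h1 : A (1 - cl a) (cl b) = cl b - A (cl a) (cl b) := by linarith
  rw [h1, ENNReal.ofReal_sub _ (hA.mem01 (cl_mem a) (cl_mem b)).1,
    ENNReal.sub_sub_cancel ENNReal.ofReal_ne_top
      (ENNReal.ofReal_le_ofReal (hA.le_right (cl_mem a) (cl_mem b)))]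
  exact (nu_Iic hA hdist a b).symm

end Meas3

section Int

variable {A C : ℝ → ℝ → ℝ} {μ : Measure (ℝ × ℝ)}

lemma biForm_eq_CL (hC : IsCopula C) (μ : Measure (ℝ × ℝ)) :
    biForm μ C = ∫ p, CL C p ∂(μ.restrict unitSquare) := by
  apply setIntegral_congr_fun measurableSet_unitSquare
  intro p hp
  unfold CL
  rw [cl_of_mem hp.1, cl_of_mem hp.2]

lemma IsCopula.swap (hC : IsCopula C) : IsCopula (fun u v => C v u) := by
  obtain ⟨h1, h2, h3, h4, h5, h6⟩ := hC
  refine ⟨fun u hu => h2 u hu, fun v hv => h1 v hv, fun u hu => h4 u hu,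
    fun v hv => h3 v hv, ?_, fun u hu v hv => h6 v hv u hu⟩
  intro u₁ u₂ v₁ v₂ hu₁ hu₂ hv₁ hv₂ h12 h34
  have := h5 v₁ v₂ u₁ u₂ hv₁ hv₂ hu₁ hu₂ h34 h12
  linarith

lemma biForm_swap (hA : IsCopula A) (hinv : IsGammaInvariant A)
    (hμ : IsProbabilityMeasure μ) (hdist : IsDistributionOf μ A) (hC : IsCopula C) :
    biForm μ (fun u v => C v u) = biForm μ C := by
  haveI := nu_prob hA hdist
  rw [biForm_eq_CL hC.swap, biForm_eq_CL hC]
  have h1 : (fun p : ℝ × ℝ => CL (fun u v => C v u) p) = fun p => CL C (Prod.swap p) := rfl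
  rw [h1, ← integral_map measurable_swap.aemeasurable hC.continuous_CL.aestronglyMeasurable,
    nu_swap hA hinv hdist]

lemma biForm_nu1 (hA : IsCopula A) (hinv : IsGammaInvariant A)
    (hμ : IsProbabilityMeasure μ) (hdist : IsDistributionOf μ A) (hC : IsCopula C) :
    biForm μ (fun u v => v - C (1 - u) v) = 1/2 - biForm μ C := by
  haveI := nu_prob hA hdist
  have hr : Measurable (fun p : ℝ × ℝ => (1 - p.1, p.2)) :=
    (measurable_const.sub measurable_fst).prodMk measurable_snd
  have step1 : biForm μ (fun u v => v - C (1 - u) v)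
      = ∫ p, (cl p.2 - CL C (1 - p.1, p.2)) ∂(μ.restrict unitSquare) := by
    apply setIntegral_congr_fun measurableSet_unitSquare
    intro p hp
    have h1 : (1 : ℝ) - p.1 ∈ Icc (0:ℝ) 1 := ⟨by linarith [hp.1.2], by linarith [hp.1.1]⟩
    show p.2 - C (1 - p.1) p.2 = cl p.2 - CL C (1 - p.1, p.2)
    unfold CL
    rw [cl_of_mem hp.2, cl_of_mem h1]
  have hint2 : Integrable (fun p : ℝ × ℝ => CL C (1 - p.1, p.2)) (μ.restrict unitSquare) := by
    have := hC.integrable_CL (μ.restrict unitSquare)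
    rw [← nu_refl hA hinv hdist] at this
    exact (integrable_map_measure hC.continuous_CL.aestronglyMeasurable hr.aemeasurable).mp this
  have hint1 : Integrable (fun p : ℝ × ℝ => cl p.2) (μ.restrict unitSquare) := by
    refine ⟨(continuous_cl.comp continuous_snd).aestronglyMeasurable, ?_⟩
    apply HasFiniteIntegral.of_bounded (C := 1)
    filter_upwards with p
    rw [Real.norm_eq_abs, abs_le]
    exact ⟨by linarith [(cl_mem p.2).1], (cl_mem p.2).2⟩
  rw [step1, integral_sub hint1 hint2]
  have hsnd : ∫ p, cl p.2 ∂(μ.restrict unitSquare) = 1/2 := by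
    rw [show (fun p : ℝ × ℝ => cl p.2) = fun p => cl (Prod.snd p) from rfl,
      ← integral_map measurable_snd.aemeasurable continuous_cl.aestronglyMeasurable,
      map_snd_nu hA hdist]
    have : ∫ x in Icc (0:ℝ) 1, cl x = ∫ x in Icc (0:ℝ) 1, x := by
      apply setIntegral_congr_fun measurableSet_Icc
      intro x hx
      exact cl_of_mem hx
    rw [this, integral_Icc_eq_integral_Ioc, ← intervalIntegral.integral_of_le zero_le_one,
      integral_id]
    norm_num
  have hrefl : ∫ p, CL C (1 - p.1, p.2) ∂(μ.restrict unitSquare) = biForm μ C := by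
    rw [biForm_eq_CL hC,
      show (fun p : ℝ × ℝ => CL C (1 - p.1, p.2))
        = fun p => CL C ((fun q : ℝ × ℝ => (1 - q.1, q.2)) p) from rfl,
      ← integral_map hr.aemeasurable hC.continuous_CL.aestronglyMeasurable,
      nu_refl hA hinv hdist]
  rw [hsnd, hrefl]

end Int

section Min

variable {A : ℝ → ℝ → ℝ} {μ : Measure (ℝ × ℝ)}

lemma lin_int (a b c d : ℝ) :
    ∫ t in a..b, (c + d * t) = c * (b - a) + d * (b ^ 2 - a ^ 2) / 2 := by
  have hg : IntervalIntegrable (fun t : ℝ => d * t) volume a b := by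
    apply Continuous.intervalIntegrable
    exact continuous_const.mul continuous_id'
  rw [intervalIntegral.integral_add intervalIntegrable_const hg,
    intervalIntegral.integral_const_mul, integral_id, intervalIntegral.integral_const]
  simp only [smul_eq_mul]
  ring

lemma biForm_min_gt (hA : IsCopula A) (hinv : IsGammaInvariant A)
    (hμ : IsProbabilityMeasure μ) (hdist : IsDistributionOf μ A) :
    1/4 < biForm μ (fun u v => min u v) := by
  haveI := nu_prob hA hdist
  set ν := μ.restrict unitSquare with hν
  set G : ℝ → ℝ := fun t => 1 - 2 * t + A (cl t) (cl t) with hG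
  have hGc : Continuous G := by
    apply (continuous_const.sub (continuous_const.mul continuous_id)).add
    exact hA.continuous_CL.comp (continuous_id.prodMk continuous_id)
  -- the integrand
  have hMc : IsCopula (fun u v => min u v) := isCopula_min
  have hf : biForm μ (fun u v => min u v) = ∫ p, CL (fun u v => min u v) p ∂ν :=
    biForm_eq_CL hMc μ
  have hfnn : ∀ p : ℝ × ℝ, 0 ≤ CL (fun u v => min u v) p := fun p => (hMc.CL_mem p).1
  have hfm : AEStronglyMeasurable (CL (fun u v => min u v)) ν :=
    hMc.continuous_CL.aestronglyMeasurable
  have hl1 : ∫ p, CL (fun u v => min u v) p ∂ν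
      = (∫⁻ p, ENNReal.ofReal (CL (fun u v => min u v) p) ∂ν).toReal :=
    integral_eq_lintegral_of_nonneg_ae (ae_of_all _ hfnn) hfm
  have hl2 : ∫⁻ p, ENNReal.ofReal (CL (fun u v => min u v) p) ∂ν
      = ∫⁻ t in Ioi (0:ℝ), ν {p : ℝ × ℝ | t < CL (fun u v => min u v) p} :=
    lintegral_eq_lintegral_meas_lt ν (ae_of_all _ hfnn) hfm.aemeasurable
  -- value of the layer measure on (0,1)
  have key : ∀ t ∈ Ioo (0:ℝ) 1,
      ν {p : ℝ × ℝ | t < CL (fun u v => min u v) p} = ENNReal.ofReal (G t) := by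
    intro t ht
    have htm : t ∈ Icc (0:ℝ) 1 := ⟨ht.1.le, ht.2.le⟩
    have hclt : cl t = t := cl_of_mem htm
    have hset : {p : ℝ × ℝ | t < CL (fun u v => min u v) p} = Ioi t ×ˢ Ioi t := by
      ext p
      simp only [mem_setOf_eq, CL, lt_min_iff, mem_prod, mem_Ioi]
      have hiff : ∀ x : ℝ, t < cl x ↔ t < x := by
        intro x
        unfold cl
        constructor
        · intro hx
          rcases le_or_gt x t with h | h
          · exfalso
            have : max 0 (min x 1) ≤ t := max_le htm.1 (min_le_of_left_le (by linarith))
            linarith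
          · exact h
        · intro hx
          have : t < min x 1 := lt_min hx ht.2
          exact lt_of_lt_of_le this (le_max_right _ _)
      rw [hiff p.1, hiff p.2]
    rw [hset]
    have hcompl : Ioi t ×ˢ Ioi t = ((Iic t ×ˢ (univ : Set ℝ)) ∪ ((univ : Set ℝ) ×ˢ Iic t))ᶜ := by
      ext p
      simp only [mem_compl_iff, mem_union, mem_prod, mem_Iic, mem_univ, and_true, true_and,
        not_or, not_le, mem_Ioi]
    have hSmeas : MeasurableSet ((Iic t ×ˢ (univ : Set ℝ)) ∪ ((univ : Set ℝ) ×ˢ Iic t)) :=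
      (measurableSet_Iic.prod MeasurableSet.univ).union (MeasurableSet.univ.prod measurableSet_Iic)
    rw [hcompl, measure_compl hSmeas (measure_ne_top _ _)]
    have hinter : (Iic t ×ˢ (univ : Set ℝ)) ∩ ((univ : Set ℝ) ×ˢ Iic t) = Iic t ×ˢ Iic t := by
      rw [prod_inter_prod, inter_univ, univ_inter]
    have hunion : ν ((Iic t ×ˢ (univ : Set ℝ)) ∪ ((univ : Set ℝ) ×ˢ Iic t))
        = ENNReal.ofReal (2 * t - A t t) := by
      have hsum := measure_union_add_inter (μ := ν) (t := (univ : Set ℝ) ×ˢ Iic t)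
        (Iic t ×ˢ (univ : Set ℝ)) (MeasurableSet.univ.prod measurableSet_Iic)
      rw [hinter, nu_Iic hA hdist, nu_fst hA hdist, nu_snd hA hdist, hclt] at hsum
      have hAtt0 : 0 ≤ A t t := (hA.mem01 htm htm).1
      have hAtt1 : A t t ≤ t := hA.le_right htm htm
      have hrw : ENNReal.ofReal t + ENNReal.ofReal t
          = ENNReal.ofReal (2 * t - A t t) + ENNReal.ofReal (A t t) := by
        rw [← ENNReal.ofReal_add (by linarith) hAtt0, ← ENNReal.ofReal_add ht.1.le ht.1.le]
        congr 1
        ring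
      rw [hrw] at hsum
      calc ν ((Iic t ×ˢ (univ : Set ℝ)) ∪ ((univ : Set ℝ) ×ˢ Iic t))
          = ν ((Iic t ×ˢ (univ : Set ℝ)) ∪ ((univ : Set ℝ) ×ˢ Iic t))
            + ENNReal.ofReal (A t t) - ENNReal.ofReal (A t t) :=
            (ENNReal.add_sub_cancel_right ENNReal.ofReal_ne_top).symm
        _ = ENNReal.ofReal (2 * t - A t t) + ENNReal.ofReal (A t t)
            - ENNReal.ofReal (A t t) := by rw [hsum]
        _ = ENNReal.ofReal (2 * t - A t t) :=
            ENNReal.add_sub_cancel_right ENNReal.ofReal_ne_top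
    rw [hunion, measure_univ]
    have h2t : 0 ≤ 2 * t - A t t := by
      have := (hA.mem01 htm htm).1
      have : A t t ≤ t := hA.le_right htm htm
      linarith [ht.1.le]
    rw [← ENNReal.ofReal_one, ← ENNReal.ofReal_sub _ h2t]
    congr 1
    simp only [hG, hclt]
    ring
  -- kill the part above 1
  have key2 : ∀ t ∈ Ioi (1:ℝ), ν {p : ℝ × ℝ | t < CL (fun u v => min u v) p} = 0 := by
    intro t ht
    have : {p : ℝ × ℝ | t < CL (fun u v => min u v) p} = ∅ := by
      ext p
      simp only [mem_setOf_eq, mem_empty_iff_false, iff_false, not_lt]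
      exact le_trans (hMc.CL_mem p).2 (le_of_lt ht)
    rw [this, measure_empty]
  have hsplit : ∫⁻ t in Ioi (0:ℝ), ν {p : ℝ × ℝ | t < CL (fun u v => min u v) p}
      = ∫⁻ t in Ioc (0:ℝ) 1, ENNReal.ofReal (G t) := by
    rw [← Ioc_union_Ioi_eq_Ioi (zero_le_one : (0:ℝ) ≤ 1),
      lintegral_union measurableSet_Ioi (Ioc_disjoint_Ioi le_rfl)]
    have hz : ∫⁻ t in Ioi (1:ℝ), ν {p : ℝ × ℝ | t < CL (fun u v => min u v) p} = 0 := by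
      rw [setLIntegral_congr_fun measurableSet_Ioi key2, lintegral_zero]
    rw [hz, add_zero]
    calc ∫⁻ t in Ioc (0:ℝ) 1, ν {p : ℝ × ℝ | t < CL (fun u v => min u v) p}
        = ∫⁻ t in Ioo (0:ℝ) 1, ν {p : ℝ × ℝ | t < CL (fun u v => min u v) p} :=
          (setLIntegral_congr Ioo_ae_eq_Ioc).symm
      _ = ∫⁻ t in Ioo (0:ℝ) 1, ENNReal.ofReal (G t) :=
          setLIntegral_congr_fun measurableSet_Ioo key
      _ = ∫⁻ t in Ioc (0:ℝ) 1, ENNReal.ofReal (G t) := setLIntegral_congr Ioo_ae_eq_Ioc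
  have hGnn : ∀ t ∈ Ioc (0:ℝ) 1, 0 ≤ G t := by
    intro t ht
    have htm : t ∈ Icc (0:ℝ) 1 := ⟨ht.1.le, ht.2⟩
    have := hA.frechet htm htm
    simp only [hG, cl_of_mem htm]
    linarith
  have hGint : IntegrableOn G (Ioc (0:ℝ) 1) volume :=
    (hGc.integrableOn_Icc).mono_set Ioc_subset_Icc_self
  have hl3 : ∫⁻ t in Ioc (0:ℝ) 1, ENNReal.ofReal (G t)
      = ENNReal.ofReal (∫ t in Ioc (0:ℝ) 1, G t) :=
    (ofReal_integral_eq_lintegral_ofReal hGint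
      ((ae_restrict_iff' measurableSet_Ioc).mpr (ae_of_all _ hGnn))).symm
  -- now the real bound
  have hIoc : ∫ t in Ioc (0:ℝ) 1, G t = ∫ t in (0:ℝ)..1, G t :=
    (intervalIntegral.integral_of_le zero_le_one).symm
  have hhalf : A (1/2) (1/2) = 1/4 := by
    have hm : (1/2 : ℝ) ∈ Icc (0:ℝ) 1 := by norm_num
    have := (hinv (1/2) hm (1/2) hm).2
    norm_num at this
    linarith
  have hm2 : (1/2 : ℝ) ∈ Icc (0:ℝ) 1 := by norm_num
  have hbound : 35/128 ≤ ∫ t in (0:ℝ)..1, G t := by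
    rw [← intervalIntegral.integral_add_adjacent_intervals
        (hGc.intervalIntegrable 0 (3/8)) (hGc.intervalIntegrable (3/8) 1),
      ← intervalIntegral.integral_add_adjacent_intervals
        (hGc.intervalIntegrable (3/8) (1/2)) (hGc.intervalIntegrable (1/2) 1),
      ← intervalIntegral.integral_add_adjacent_intervals
        (hGc.intervalIntegrable (1/2) (9/16)) (hGc.intervalIntegrable (9/16) 1)]
    have hb1 : ∫ t in (0:ℝ)..(3/8), (1 + (-2) * t) ≤ ∫ t in (0:ℝ)..(3/8), G t := by
      apply intervalIntegral.integral_mono_on (by norm_num)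
        ((continuous_const.add (continuous_const.mul continuous_id')).intervalIntegrable _ _)
        (hGc.intervalIntegrable _ _)
      intro t ht
      have htm : t ∈ Icc (0:ℝ) 1 := ⟨ht.1, by linarith [ht.2]⟩
      have := (hA.mem01 (cl_mem t) (cl_mem t)).1
      simp only [hG, Pi.add_apply, Pi.mul_apply]
      linarith
    have hb2 : ∫ t in (3/8:ℝ)..(1/2), (1/4 + 0 * t) ≤ ∫ t in (3/8:ℝ)..(1/2), G t := by
      apply intervalIntegral.integral_mono_on (by norm_num)
        ((continuous_const.add (continuous_const.mul continuous_id')).intervalIntegrable _ _)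
        (hGc.intervalIntegrable _ _)
      intro t ht
      have htm : t ∈ Icc (0:ℝ) 1 := ⟨by linarith [ht.1], by linarith [ht.2]⟩
      have habs := hA.abs_diff_le htm hm2 htm hm2
      have habs' : |t - 1/2| = 1/2 - t := by
        rw [abs_of_nonpos (by linarith [ht.2])]; ring
      rw [habs', hhalf] at habs
      have hlow := (abs_le.mp habs).1
      simp only [hG, cl_of_mem htm, Pi.add_apply, Pi.mul_apply]
      linarith
    have hb3 : ∫ t in (1/2:ℝ)..(9/16), (9/4 + (-4) * t) ≤ ∫ t in (1/2:ℝ)..(9/16), G t := by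
      apply intervalIntegral.integral_mono_on (by norm_num)
        ((continuous_const.add (continuous_const.mul continuous_id')).intervalIntegrable _ _)
        (hGc.intervalIntegrable _ _)
      intro t ht
      have htm : t ∈ Icc (0:ℝ) 1 := ⟨by linarith [ht.1], by linarith [ht.2]⟩
      have habs := hA.abs_diff_le htm hm2 htm hm2
      have habs' : |t - 1/2| = t - 1/2 := by
        rw [abs_of_nonneg (by linarith [ht.1])]
      rw [habs', hhalf] at habs
      have hlow := (abs_le.mp habs).1
      simp only [hG, cl_of_mem htm, Pi.add_apply, Pi.mul_apply]
      linarith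
    have hb4 : ∫ t in (9/16:ℝ)..1, (0 + 0 * t) ≤ ∫ t in (9/16:ℝ)..1, G t := by
      apply intervalIntegral.integral_mono_on (by norm_num)
        ((continuous_const.add (continuous_const.mul continuous_id')).intervalIntegrable _ _)
        (hGc.intervalIntegrable _ _)
      intro t ht
      have htm : t ∈ Icc (0:ℝ) 1 := ⟨by linarith [ht.1], ht.2⟩
      have := hA.frechet htm htm
      simp only [hG, cl_of_mem htm, Pi.add_apply, Pi.mul_apply]
      linarith
    rw [lin_int] at hb1 hb2 hb3 hb4
    norm_num at hb1 hb2 hb3 hb4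
    linarith
  -- put everything together
  have hnn : 0 ≤ ∫ t in Ioc (0:ℝ) 1, G t := by
    apply setIntegral_nonneg measurableSet_Ioc hGnn
  rw [hf, hl1, hl2, hsplit, hl3, ENNReal.toReal_ofReal hnn, hIoc]
  linarith

theorem stmt2 (A : ℝ → ℝ → ℝ) (μ : MeasureTheory.Measure (ℝ × ℝ))
    (hA : IsCopula A) (hinv : IsGammaInvariant A)
    (hμ : MeasureTheory.IsProbabilityMeasure μ) (hdist : IsDistributionOf μ A)
    (κ : (ℝ → ℝ → ℝ) → ℝ)
    (hκ : ∀ C, κ C = (biForm μ C - 1/4) / (biForm μ (fun u v => min u v) - 1/4)) :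
    κ (fun u v => min u v) = 1 ∧
    (∀ C, IsCopula C → κ (fun u v => C v u) = κ C) ∧
    (∀ C, IsCopula C → κ (fun u v => v - C (1 - u) v) = -(κ C)) := by
  have hd : 0 < biForm μ (fun u v => min u v) - 1/4 := by
    have := biForm_min_gt hA hinv hμ hdist
    linarith
  refine ⟨?_, ?_, ?_⟩
  · rw [hκ]
    exact div_self (ne_of_gt hd)
  · intro C hC
    rw [hκ, hκ, biForm_swap hA hinv hμ hdist hC]
  · intro C hC
    rw [hκ (fun u v => v - C (1 - u) v), hκ C, biForm_nu1 hA hinv hμ hdist hC, ← neg_div]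
    congr 1
    ring
end Min
end

section
/- Let A be a Γ-invariant bivariate copula, let μ be a probability measure on [0,1]² whose distribution function is A, and define κ_A[C] := ([C,A] − 1/4)/([M,A] − 1/4) with [C,A] := ∫_{[0,1]²} C dμ (the denominator is strictly positive). Then κ_A is continuous: if {C_n} is a sequence of copulas and C is a copula such that C_n(u,v) → C(u,v) for all u,v ∈ [0,1], then κ_A[C_n] → κ_A[C]. -/
open MeasureTheory Set

lemma copula_lip1 {C : ℝ → ℝ → ℝ} (hC : IsCopula C) {u₁ u₂ v : ℝ}
    (h1 : u₁ ∈ Icc (0:ℝ) 1) (h2 : u₂ ∈ Icc (0:ℝ) 1) (hv : v ∈ Icc (0:ℝ) 1) :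
    |C u₁ v - C u₂ v| ≤ |u₁ - u₂| := by
  obtain ⟨hb0, _, hb1, _, hinc, _⟩ := hC
  have key : ∀ a b : ℝ, a ∈ Icc (0:ℝ) 1 → b ∈ Icc (0:ℝ) 1 → a ≤ b →
      |C b v - C a v| ≤ b - a := by
    intro a b ha hb hab
    have h₁ := hinc a b 0 v ha hb (by simp) hv hab hv.1
    have h₂ := hinc a b v 1 ha hb hv (by simp) hab hv.2
    rw [hb0 a ha, hb0 b hb] at h₁
    rw [hb1 a ha, hb1 b hb] at h₂
    rw [abs_le]; constructor <;> linarith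
  rcases le_total u₁ u₂ with h | h
  · calc |C u₁ v - C u₂ v| = |C u₂ v - C u₁ v| := abs_sub_comm _ _
      _ ≤ u₂ - u₁ := key u₁ u₂ h1 h2 h
      _ ≤ |u₁ - u₂| := by rw [abs_sub_comm]; exact le_abs_self _
  · calc |C u₁ v - C u₂ v| ≤ u₁ - u₂ := key u₂ u₁ h2 h1 h
      _ ≤ |u₁ - u₂| := le_abs_self _

lemma copula_lip2 {C : ℝ → ℝ → ℝ} (hC : IsCopula C) {u v₁ v₂ : ℝ}
    (hu : u ∈ Icc (0:ℝ) 1) (h1 : v₁ ∈ Icc (0:ℝ) 1) (h2 : v₂ ∈ Icc (0:ℝ) 1) :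
    |C u v₁ - C u v₂| ≤ |v₁ - v₂| := by
  obtain ⟨_, hb0, _, hb1, hinc, _⟩ := hC
  have key : ∀ a b : ℝ, a ∈ Icc (0:ℝ) 1 → b ∈ Icc (0:ℝ) 1 → a ≤ b →
      |C u b - C u a| ≤ b - a := by
    intro a b ha hb hab
    have h₁ := hinc 0 u a b (by simp) hu ha hb hu.1 hab
    have h₂ := hinc u 1 a b hu (by simp) ha hb hu.2 hab
    rw [hb0 a ha, hb0 b hb] at h₁
    rw [hb1 a ha, hb1 b hb] at h₂
    rw [abs_le]; constructor <;> linarith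
  rcases le_total v₁ v₂ with h | h
  · calc |C u v₁ - C u v₂| = |C u v₂ - C u v₁| := abs_sub_comm _ _
      _ ≤ v₂ - v₁ := key v₁ v₂ h1 h2 h
      _ ≤ |v₁ - v₂| := by rw [abs_sub_comm]; exact le_abs_self _
  · calc |C u v₁ - C u v₂| ≤ v₁ - v₂ := key v₂ v₁ h2 h1 h
      _ ≤ |v₁ - v₂| := le_abs_self _

lemma copula_continuousOn {C : ℝ → ℝ → ℝ} (hC : IsCopula C) :
    ContinuousOn (fun p : ℝ × ℝ => C p.1 p.2) unitSquare := by
  apply LipschitzOnWith.continuousOn (K := 2)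
  rw [lipschitzOnWith_iff_dist_le_mul]
  rintro ⟨u, v⟩ ⟨hu, hv⟩ ⟨u', v'⟩ ⟨hu', hv'⟩
  simp only [Prod.dist_eq, Real.dist_eq]
  have h1 : |C u v - C u' v| ≤ |u - u'| := copula_lip1 hC hu hu' hv
  have h2 : |C u' v - C u' v'| ≤ |v - v'| := copula_lip2 hC hu' hv hv'
  have htri : |C u v - C u' v'| ≤ |C u v - C u' v| + |C u' v - C u' v'| :=
    abs_sub_le _ _ _
  have hm1 : |u - u'| ≤ max |u - u'| |v - v'| := le_max_left _ _
  have hm2 : |v - v'| ≤ max |u - u'| |v - v'| := le_max_right _ _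
  push_cast
  linarith

theorem stmt5 (A : ℝ → ℝ → ℝ) (μ : MeasureTheory.Measure (ℝ × ℝ))
    (hA : IsCopula A) (hinv : IsGammaInvariant A)
    (hμ : MeasureTheory.IsProbabilityMeasure μ) (hdist : IsDistributionOf μ A)
    (κ : (ℝ → ℝ → ℝ) → ℝ)
    (hκ : ∀ C, κ C = (biForm μ C - 1/4) / (biForm μ (fun u v => min u v) - 1/4))
    (Cseq : ℕ → ℝ → ℝ → ℝ) (hCseq : ∀ n, IsCopula (Cseq n))
    (C : ℝ → ℝ → ℝ) (hC : IsCopula C)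
    (hconv : ∀ u ∈ Set.Icc (0:ℝ) 1, ∀ v ∈ Set.Icc (0:ℝ) 1,
      Filter.Tendsto (fun n => Cseq n u v) Filter.atTop (nhds (C u v))) :
    Filter.Tendsto (fun n => κ (Cseq n)) Filter.atTop (nhds (κ C)) := by
  
  have hmeas : MeasurableSet unitSquare := measurableSet_Icc.prod measurableSet_Icc
  have hmain : Filter.Tendsto (fun n => biForm μ (Cseq n)) Filter.atTop
      (nhds (biForm μ C)) := by
    unfold biForm
    apply MeasureTheory.tendsto_integral_of_dominated_convergence (fun _ => (1:ℝ))
    · intro n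
      exact (copula_continuousOn (hCseq n)).aestronglyMeasurable hmeas
    · exact integrable_const 1
    · intro n
      refine (ae_restrict_iff' hmeas).2 (Filter.Eventually.of_forall ?_)
      rintro ⟨u, v⟩ ⟨hu, hv⟩
      have h := (hCseq n).2.2.2.2.2 u hu v hv
      rw [Real.norm_eq_abs, abs_le]
      exact ⟨by linarith [h.1], h.2⟩
    · refine (ae_restrict_iff' hmeas).2 (Filter.Eventually.of_forall ?_)
      rintro ⟨u, v⟩ ⟨hu, hv⟩
      exact hconv u hu v hv
  simp only [hκ]
  exact (hmain.sub_const _).div_const _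
end

section
/- For every q ∈ [0,1], the function E_q : [0,1]² → [0,1] defined by E_q(u,v) := (1−q)·uv + q·(1/2)(min(u,v) + max(u+v−1,0)) is a Γ-invariant copula: it is a copula, E_q(u,v) = E_q(v,u), and E_q(u,v) = v − E_q(1−u,v) for all u,v ∈ [0,1]. -/
open MeasureTheory Set

lemma minvol (u₁ u₂ v₁ v₂ : ℝ) (h1 : u₁ ≤ u₂) (h2 : v₁ ≤ v₂) :
    0 ≤ min u₂ v₂ - min u₂ v₁ - min u₁ v₂ + min u₁ v₁ := by
  simp only [min_def]; split_ifs <;> linarith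

lemma maxvol (u₁ u₂ v₁ v₂ : ℝ) (h1 : u₁ ≤ u₂) (h2 : v₁ ≤ v₂) :
    0 ≤ max (u₂ + v₂ - 1) 0 - max (u₂ + v₁ - 1) 0 - max (u₁ + v₂ - 1) 0 + max (u₁ + v₁ - 1) 0 := by
  simp only [max_def]; split_ifs <;> linarith

theorem stmt9 (q : ℝ) (hq : q ∈ Icc (0:ℝ) 1) :
    IsCopula (fun u v => (1 - q) * (u * v) + q * ((1/2) * (min u v + max (u + v - 1) 0))) ∧
    IsGammaInvariant
      (fun u v => (1 - q) * (u * v) + q * ((1/2) * (min u v + max (u + v - 1) 0))) := by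
  obtain ⟨hq0, hq1⟩ := hq
  constructor
  · refine ⟨?_, ?_, ?_, ?_, ?_, ?_⟩
    · rintro u ⟨hu0, hu1⟩
      simp only [min_def, max_def]; split_ifs <;> ring_nf <;> nlinarith
    · rintro v ⟨hv0, hv1⟩
      simp only [min_def, max_def]; split_ifs <;> ring_nf <;> nlinarith
    · rintro u ⟨hu0, hu1⟩
      simp only [min_def, max_def]; split_ifs <;> ring_nf <;> nlinarith
    · rintro v ⟨hv0, hv1⟩
      simp only [min_def, max_def]; split_ifs <;> ring_nf <;> nlinarith
    · rintro u₁ u₂ v₁ v₂ ⟨h10,h11⟩ ⟨h20,h21⟩ ⟨h30,h31⟩ ⟨h40,h41⟩ hu hv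
      have hm := minvol u₁ u₂ v₁ v₂ hu hv
      have hM := maxvol u₁ u₂ v₁ v₂ hu hv
      have hPi : 0 ≤ (u₂ - u₁) * (v₂ - v₁) := mul_nonneg (by linarith) (by linarith)
      dsimp only
      nlinarith [mul_nonneg hq0 hm, mul_nonneg hq0 hM,
        mul_nonneg (by linarith : (0:ℝ) ≤ 1 - q) hPi]
    · rintro u ⟨hu0, hu1⟩ v ⟨hv0, hv1⟩
      have ha0 : (0:ℝ) ≤ u * v := mul_nonneg hu0 hv0
      have ha1 : u * v ≤ 1 := by nlinarith
      have hb0 : (0:ℝ) ≤ (1/2) * (min u v + max (u + v - 1) 0) := by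
        have : (0:ℝ) ≤ min u v := le_min hu0 hv0
        have : (0:ℝ) ≤ max (u + v - 1) 0 := le_max_right _ _
        positivity
      have hb1 : (1/2) * (min u v + max (u + v - 1) 0) ≤ 1 := by
        have h1 : min u v ≤ 1 := min_le_of_left_le hu1
        have h2 : max (u + v - 1) 0 ≤ 1 := max_le (by linarith) (by norm_num)
        linarith
      constructor
      · nlinarith
      · nlinarith
  · rintro u ⟨hu0, hu1⟩ v ⟨hv0, hv1⟩
    constructor
    · simp only [min_comm u v]
      have : u + v - 1 = v + u - 1 := by ring
      rw [this]; ring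
    · have key : min (1 - u) v + max (1 - u + v - 1) 0
          = 2 * v - (min u v + max (u + v - 1) 0) := by
        rcases le_total u v with h | h <;> rcases le_total (u + v) 1 with h' | h' <;>
          simp only [min_def, max_def] <;> split_ifs <;> linarith
      simp only [key]; ring
end

section
/- Let n ≥ 1, let A be a bivariate copula, and let μ be a probability measure on [0,1]² whose distribution function is A, i.e. μ([0,u]×[0,v]) = A(u,v) for all u,v ∈ [0,1]. Let σ and τ be permutations of {1,…,n} and set u_k := (σ(k)/(n+1), τ(k)/(n+1)) for k = 1,…,n. Define the empirical copula Ĉ_n : [0,1]² → [0,1] by Ĉ_n(u,v) := (1/n)·#{k ∈ {1,…,n} : σ(k)/(n+1) ≤ u and τ(k)/(n+1) ≤ v}. Then ∫_{[0,1]²} Ĉ_n dμ = (1/n)·Σ_{k=1}^n A(σ(k)/(n+1), τ(k)/(n+1)). -/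
open MeasureTheory Set

lemma myGauss (n : ℕ) : ∑ j : Fin n, (((j:ℕ):ℝ) + 1) = n * (n+1) / 2 := by
  induction n with
  | zero => simp
  | succ m ih =>
    rw [Fin.sum_univ_castSucc]
    simp only [Fin.coe_castSucc, Fin.val_last] at *
    rw [ih]; push_cast; ring

lemma myPermSum {n : ℕ} (σ : Equiv.Perm (Fin n)) :
    ∑ k : Fin n, ((((σ k).val : ℝ) + 1)/((n:ℝ)+1)) = (n:ℝ)/2 := by
  have hn1 : ((n:ℝ)+1) ≠ 0 := by positivity
  rw [← Finset.sum_div, Equiv.sum_comp σ (fun j : Fin n => (((j:ℕ):ℝ) + 1)), myGauss]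
  field_simp

lemma myRectNonneg {A : ℝ → ℝ → ℝ} (hA : IsCopula A) {a b : ℝ}
    (ha : a ∈ Icc (0:ℝ) 1) (hb : b ∈ Icc (0:ℝ) 1) :
    0 ≤ 1 - a - b + A a b := by
  have h := hA.2.2.2.2.1 a 1 b 1 ha (by norm_num) hb (by norm_num) ha.2 hb.2
  rw [hA.2.2.1 a ha, hA.2.2.2.1 b hb, hA.2.2.1 1 (by norm_num)] at h
  linarith

lemma myVLine {A : ℝ → ℝ → ℝ} {μ : Measure (ℝ × ℝ)} [IsFiniteMeasure μ]
    (hA : IsCopula A) (hdist : IsDistributionOf μ A) {a : ℝ} (ha : a ∈ Ioc (0:ℝ) 1) :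
    μ ({a} ×ˢ Icc (0:ℝ) 1) = 0 := by
  have hA1 : ∀ u ∈ Icc (0:ℝ) 1, A u 1 = u := hA.2.2.1
  have key : ∀ ε : ℝ, 0 < ε → μ ({a} ×ˢ Icc (0:ℝ) 1) ≤ ENNReal.ofReal ε := by
    intro ε hε
    set a' := max 0 (a - ε) with ha'
    have h0a' : 0 ≤ a' := le_max_left _ _
    have ha'a : a' < a := by
      rcases le_or_gt (a - ε) 0 with h | h
      · simp [ha', max_eq_left h, ha.1]
      · simp [ha', max_eq_right h.le]; linarith
    have ha'1 : a' ≤ 1 := ha'a.le.trans ha.2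
    have hsub : {a} ×ˢ Icc (0:ℝ) 1 ⊆
        (Icc (0:ℝ) a ×ˢ Icc (0:ℝ) 1) \ (Icc (0:ℝ) a' ×ˢ Icc (0:ℝ) 1) := by
      rintro ⟨x, y⟩ ⟨hx, hy⟩
      simp only [mem_singleton_iff] at hx
      subst hx
      exact ⟨⟨⟨ha.1.le, le_refl _⟩, hy⟩, by rintro ⟨⟨_, h2⟩, _⟩; linarith⟩
    calc μ ({a} ×ˢ Icc (0:ℝ) 1)
        ≤ μ ((Icc (0:ℝ) a ×ˢ Icc (0:ℝ) 1) \ (Icc (0:ℝ) a' ×ˢ Icc (0:ℝ) 1)) :=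
          measure_mono hsub
      _ = μ (Icc (0:ℝ) a ×ˢ Icc (0:ℝ) 1) - μ (Icc (0:ℝ) a' ×ˢ Icc (0:ℝ) 1) := by
          apply measure_diff
          · exact prod_mono (Icc_subset_Icc le_rfl ha'a.le) le_rfl
          · exact (measurableSet_Icc.prod measurableSet_Icc).nullMeasurableSet
          · exact measure_ne_top μ _
      _ = ENNReal.ofReal a - ENNReal.ofReal a' := by
          rw [hdist a ⟨ha.1.le, ha.2⟩ 1 (by norm_num), hdist a' ⟨h0a', ha'1⟩ 1 (by norm_num),
            hA1 a ⟨ha.1.le, ha.2⟩, hA1 a' ⟨h0a', ha'1⟩]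
      _ = ENNReal.ofReal (a - a') := (ENNReal.ofReal_sub _ h0a').symm
      _ ≤ ENNReal.ofReal ε := by
          apply ENNReal.ofReal_le_ofReal
          rcases le_or_gt (a - ε) 0 with h | h
          · simp [ha', max_eq_left h]; linarith
          · simp [ha', max_eq_right h.le]
  refine le_antisymm ?_ (zero_le)
  apply ENNReal.le_of_forall_pos_le_add
  intro ε hε _
  simpa using key ε (by exact_mod_cast hε)

lemma myHLine {A : ℝ → ℝ → ℝ} {μ : Measure (ℝ × ℝ)} [IsFiniteMeasure μ]
    (hA : IsCopula A) (hdist : IsDistributionOf μ A) {b : ℝ} (hb : b ∈ Ioc (0:ℝ) 1) :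
    μ (Icc (0:ℝ) 1 ×ˢ {b}) = 0 := by
  have hA1 : ∀ v ∈ Icc (0:ℝ) 1, A 1 v = v := hA.2.2.2.1
  have key : ∀ ε : ℝ, 0 < ε → μ (Icc (0:ℝ) 1 ×ˢ {b}) ≤ ENNReal.ofReal ε := by
    intro ε hε
    set b' := max 0 (b - ε) with hb'
    have h0b' : 0 ≤ b' := le_max_left _ _
    have hb'b : b' < b := by
      rcases le_or_gt (b - ε) 0 with h | h
      · simp [hb', max_eq_left h, hb.1]
      · simp [hb', max_eq_right h.le]; linarith
    have hb'1 : b' ≤ 1 := hb'b.le.trans hb.2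
    have hsub : Icc (0:ℝ) 1 ×ˢ {b} ⊆
        (Icc (0:ℝ) 1 ×ˢ Icc (0:ℝ) b) \ (Icc (0:ℝ) 1 ×ˢ Icc (0:ℝ) b') := by
      rintro ⟨x, y⟩ ⟨hx, hy⟩
      simp only [mem_singleton_iff] at hy
      subst hy
      exact ⟨⟨hx, ⟨hb.1.le, le_refl _⟩⟩, by rintro ⟨_, ⟨_, h2⟩⟩; linarith⟩
    calc μ (Icc (0:ℝ) 1 ×ˢ {b})
        ≤ μ ((Icc (0:ℝ) 1 ×ˢ Icc (0:ℝ) b) \ (Icc (0:ℝ) 1 ×ˢ Icc (0:ℝ) b')) :=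
          measure_mono hsub
      _ = μ (Icc (0:ℝ) 1 ×ˢ Icc (0:ℝ) b) - μ (Icc (0:ℝ) 1 ×ˢ Icc (0:ℝ) b') := by
          apply measure_diff
          · exact prod_mono le_rfl (Icc_subset_Icc le_rfl hb'b.le)
          · exact (measurableSet_Icc.prod measurableSet_Icc).nullMeasurableSet
          · exact measure_ne_top μ _
      _ = ENNReal.ofReal b - ENNReal.ofReal b' := by
          rw [hdist 1 (by norm_num) b ⟨hb.1.le, hb.2⟩, hdist 1 (by norm_num) b' ⟨h0b', hb'1⟩,
            hA1 b ⟨hb.1.le, hb.2⟩, hA1 b' ⟨h0b', hb'1⟩]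
      _ = ENNReal.ofReal (b - b') := (ENNReal.ofReal_sub _ h0b').symm
      _ ≤ ENNReal.ofReal ε := by
          apply ENNReal.ofReal_le_ofReal
          rcases le_or_gt (b - ε) 0 with h | h
          · simp [hb', max_eq_left h]; linarith
          · simp [hb', max_eq_right h.le]
  refine le_antisymm ?_ (zero_le)
  apply ENNReal.le_of_forall_pos_le_add
  intro ε hε _
  simpa using key ε (by exact_mod_cast hε)

lemma myRect {A : ℝ → ℝ → ℝ} {μ : Measure (ℝ × ℝ)} [IsFiniteMeasure μ]
    (hA : IsCopula A) (hdist : IsDistributionOf μ A) {a b : ℝ}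
    (ha : a ∈ Ioc (0:ℝ) 1) (hb : b ∈ Ioc (0:ℝ) 1) :
    μ (Icc a 1 ×ˢ Icc b 1) = ENNReal.ofReal (1 - a - b + A a b) := by
  have haI : a ∈ Icc (0:ℝ) 1 := ⟨ha.1.le, ha.2⟩
  have hbI : b ∈ Icc (0:ℝ) 1 := ⟨hb.1.le, hb.2⟩
  have h2inc := hA.2.2.2.2.1
  have hA11 : A 1 1 = 1 := hA.2.2.1 1 (by norm_num)
  have hAa1 : A a 1 = a := hA.2.2.1 a haI
  have hA1b : A 1 b = b := hA.2.2.2.1 b hbI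
  -- monotonicity in first variable
  have hmono : ∀ v ∈ Icc (0:ℝ) 1, A a v ≤ A 1 v := by
    intro v hv
    have h := h2inc a 1 0 v haI (by norm_num) (by norm_num) hv ha.2 hv.1
    rw [hA.1 1 (by norm_num), hA.1 a haI] at h
    linarith
  -- A a b ≥ 0 and b - A a b ≥ 0
  have hab0 : 0 ≤ A a b := (hA.2.2.2.2.2 a haI b hbI).1
  have hbab : A a b ≤ b := by have := hmono b hbI; linarith [hA1b]
  -- the half-open strip
  have hIoc : ∀ v ∈ Icc (0:ℝ) 1,
      μ (Ioc a 1 ×ˢ Icc (0:ℝ) v) = ENNReal.ofReal (A 1 v - A a v) := by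
    intro v hv
    have hset : Ioc a 1 ×ˢ Icc (0:ℝ) v =
        (Icc (0:ℝ) 1 ×ˢ Icc (0:ℝ) v) \ (Icc (0:ℝ) a ×ˢ Icc (0:ℝ) v) := by
      ext ⟨x, y⟩
      simp only [mem_prod, mem_Ioc, mem_Icc, mem_diff]
      constructor
      · rintro ⟨⟨hax, hx1⟩, hy⟩
        exact ⟨⟨⟨by linarith [ha.1], hx1⟩, hy⟩, by rintro ⟨⟨_, hxa⟩, _⟩; linarith⟩
      · rintro ⟨⟨⟨hx0, hx1⟩, hy⟩, hnot⟩
        refine ⟨⟨?_, hx1⟩, hy⟩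
        by_contra h
        push_neg at h
        exact hnot ⟨⟨hx0, h⟩, hy⟩
    rw [hset, measure_diff (prod_mono (Icc_subset_Icc le_rfl ha.2) le_rfl)
      (measurableSet_Icc.prod measurableSet_Icc).nullMeasurableSet (measure_ne_top μ _),
      hdist 1 (by norm_num) v hv, hdist a haI v hv,
      ← ENNReal.ofReal_sub _ ((hA.2.2.2.2.2 a haI v hv).1)]
  -- the open corner rectangle
  have hcorner : μ (Ioc a 1 ×ˢ Ioc b 1) = ENNReal.ofReal (1 - a - b + A a b) := by
    have hset : Ioc a 1 ×ˢ Ioc b 1 =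
        (Ioc a 1 ×ˢ Icc (0:ℝ) 1) \ (Ioc a 1 ×ˢ Icc (0:ℝ) b) := by
      ext ⟨x, y⟩
      simp only [mem_prod, mem_Ioc, mem_Icc, mem_diff]
      constructor
      · rintro ⟨⟨hax, hx1⟩, ⟨hby, hy1⟩⟩
        exact ⟨⟨⟨hax, hx1⟩, ⟨by linarith [hb.1], hy1⟩⟩, by rintro ⟨_, ⟨_, hyb⟩⟩; linarith⟩
      · rintro ⟨⟨⟨hax, hx1⟩, ⟨hy0, hy1⟩⟩, hnot⟩
        refine ⟨⟨hax, hx1⟩, ⟨?_, hy1⟩⟩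
        by_contra h
        push_neg at h
        exact hnot ⟨⟨hax, hx1⟩, ⟨hy0, h⟩⟩
    rw [hset, measure_diff (prod_mono le_rfl (Icc_subset_Icc le_rfl hb.2))
      (measurableSet_Ioc.prod measurableSet_Icc).nullMeasurableSet (measure_ne_top μ _),
      hIoc 1 (by norm_num), hIoc b hbI, hA11, hAa1, hA1b,
      ← ENNReal.ofReal_sub _ (by linarith : (0:ℝ) ≤ b - A a b)]
    congr 1
    ring
  refine le_antisymm ?_ ?_
  · have hsub : Icc a 1 ×ˢ Icc b 1 ⊆
        (Ioc a 1 ×ˢ Ioc b 1) ∪ ({a} ×ˢ Icc (0:ℝ) 1 ∪ Icc (0:ℝ) 1 ×ˢ {b}) := by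
      rintro ⟨x, y⟩ ⟨⟨hax, hx1⟩, ⟨hby, hy1⟩⟩
      rcases eq_or_lt_of_le hax with h | h
      · exact Or.inr (Or.inl ⟨h.symm, ⟨hb.1.le.trans hby, hy1⟩⟩)
      rcases eq_or_lt_of_le hby with h' | h'
      · exact Or.inr (Or.inr ⟨⟨ha.1.le.trans hax, hx1⟩, h'.symm⟩)
      exact Or.inl ⟨⟨h, hx1⟩, ⟨h', hy1⟩⟩
    calc μ (Icc a 1 ×ˢ Icc b 1)
        ≤ μ ((Ioc a 1 ×ˢ Ioc b 1) ∪ ({a} ×ˢ Icc (0:ℝ) 1 ∪ Icc (0:ℝ) 1 ×ˢ {b})) :=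
          measure_mono hsub
      _ ≤ μ (Ioc a 1 ×ˢ Ioc b 1) + μ ({a} ×ˢ Icc (0:ℝ) 1 ∪ Icc (0:ℝ) 1 ×ˢ {b}) :=
          measure_union_le _ _
      _ = ENNReal.ofReal (1 - a - b + A a b) := by
          rw [measure_union_null (myVLine hA hdist ha) (myHLine hA hdist hb), add_zero, hcorner]
  · rw [← hcorner]
    exact measure_mono (prod_mono Ioc_subset_Icc_self Ioc_subset_Icc_self)

theorem stmt11 (n : ℕ) (hn : 1 ≤ n) (A : ℝ → ℝ → ℝ) (hA : IsCopula A)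
    (μ : MeasureTheory.Measure (ℝ × ℝ))
    (hμ : MeasureTheory.IsProbabilityMeasure μ) (hdist : IsDistributionOf μ A)
    (σ τ : Equiv.Perm (Fin n))
    (Chat : ℝ → ℝ → ℝ)
    (hChat : ∀ u v : ℝ, Chat u v = (1/(n:ℝ)) * ∑ k : Fin n,
      (if (((σ k).val : ℝ) + 1)/((n:ℝ)+1) ≤ u ∧ (((τ k).val : ℝ) + 1)/((n:ℝ)+1) ≤ v
        then (1:ℝ) else 0)) :
    biForm μ Chat = (1/(n:ℝ)) * ∑ k : Fin n,
      A ((((σ k).val : ℝ) + 1)/((n:ℝ)+1)) ((((τ k).val : ℝ) + 1)/((n:ℝ)+1)) := by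
  have hn1 : (0:ℝ) < (n:ℝ) + 1 := by positivity
  set a : Fin n → ℝ := fun k => (((σ k).val : ℝ) + 1)/((n:ℝ)+1) with ha_def
  set b : Fin n → ℝ := fun k => (((τ k).val : ℝ) + 1)/((n:ℝ)+1) with hb_def
  have hmem : ∀ (m : ℕ), m < n → ((m:ℝ)+1)/((n:ℝ)+1) ∈ Ioc (0:ℝ) 1 := by
    intro m hm
    constructor
    · positivity
    · rw [div_le_one hn1]
      have : (m:ℝ) + 1 ≤ (n:ℝ) := by exact_mod_cast Nat.succ_le_of_lt hm
      linarith
  have haI : ∀ k, a k ∈ Ioc (0:ℝ) 1 := fun k => hmem _ (σ k).2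
  have hbI : ∀ k, b k ∈ Ioc (0:ℝ) 1 := fun k => hmem _ (τ k).2
  have hTmeas : ∀ k : Fin n, MeasurableSet (Ici (a k) ×ˢ Ici (b k)) :=
    fun k => measurableSet_Ici.prod measurableSet_Ici
  have hrect : ∀ k : Fin n, unitSquare ∩ (Ici (a k) ×ˢ Ici (b k)) =
      Icc (a k) 1 ×ˢ Icc (b k) 1 := by
    intro k
    show (Icc (0:ℝ) 1 ×ˢ Icc (0:ℝ) 1) ∩ (Ici (a k) ×ˢ Ici (b k)) = _
    ext ⟨x, y⟩
    simp only [mem_inter_iff, mem_prod, mem_Icc, mem_Ici]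
    constructor
    · rintro ⟨⟨⟨_, hx1⟩, ⟨_, hy1⟩⟩, ⟨hax, hby⟩⟩
      exact ⟨⟨hax, hx1⟩, ⟨hby, hy1⟩⟩
    · rintro ⟨⟨hax, hx1⟩, ⟨hby, hy1⟩⟩
      exact ⟨⟨⟨(haI k).1.le.trans hax, hx1⟩, ⟨(hbI k).1.le.trans hby, hy1⟩⟩, hax, hby⟩
  calc biForm μ Chat
      = ∫ p in unitSquare, ((1/(n:ℝ)) * ∑ k : Fin n,
          (Ici (a k) ×ˢ Ici (b k)).indicator (fun _ => (1:ℝ)) p) ∂μ := by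
        unfold biForm
        apply integral_congr_ae
        filter_upwards with p
        rw [hChat]
        congr 1
        apply Finset.sum_congr rfl
        intro k _
        rw [Set.indicator_apply]
        simp [Set.mem_prod, Prod.le_def, mem_Ici, ha_def, hb_def]
    _ = (1/(n:ℝ)) * ∑ k : Fin n,
          ∫ p in unitSquare, (Ici (a k) ×ˢ Ici (b k)).indicator (fun _ => (1:ℝ)) p ∂μ := by
        rw [integral_const_mul]
        congr 1
        apply integral_finset_sum
        intro k _
        exact (integrable_const (1:ℝ)).indicator (hTmeas k)
    _ = (1/(n:ℝ)) * ∑ k : Fin n, (μ (Icc (a k) 1 ×ˢ Icc (b k) 1)).toReal := by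
        congr 1
        apply Finset.sum_congr rfl
        intro k _
        rw [setIntegral_indicator (hTmeas k), hrect k, setIntegral_const, smul_eq_mul, mul_one, measureReal_def]
    _ = (1/(n:ℝ)) * ∑ k : Fin n, (1 - a k - b k + A (a k) (b k)) := by
        congr 1
        apply Finset.sum_congr rfl
        intro k _
        rw [myRect hA hdist (haI k) (hbI k), ENNReal.toReal_ofReal
          (myRectNonneg hA ⟨(haI k).1.le, (haI k).2⟩ ⟨(hbI k).1.le, (hbI k).2⟩)]
    _ = (1/(n:ℝ)) * ∑ k : Fin n, A (a k) (b k) := by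
        have hsum : ∑ k : Fin n, (1 - a k - b k + A (a k) (b k)) =
            ((n:ℝ) - (n:ℝ)/2 - (n:ℝ)/2) + ∑ k : Fin n, A (a k) (b k) := by
          rw [Finset.sum_add_distrib, Finset.sum_sub_distrib, Finset.sum_sub_distrib,
            Finset.sum_const, Finset.card_univ, Fintype.card_fin, nsmul_eq_mul, mul_one,
            ha_def, hb_def, myPermSum σ, myPermSum τ]
        have hz : (n:ℝ) - (n:ℝ)/2 - (n:ℝ)/2 = 0 := by ring
        rw [hsum, hz, zero_add]
end

section
/- Let n ≥ 1, let A be a bivariate copula, and let σ be a permutation of {1,…,n}. Then Σ_{k=1}^n A(k/(n+1), (n+1−k)/(n+1)) ≤ Σ_{k=1}^n A(k/(n+1), σ(k)/(n+1)) ≤ Σ_{k=1}^n A(k/(n+1), k/(n+1)). Equivalently, with ⟨C,A⟩_n := (1/n)Σ_k A(k/(n+1), σ(k)/(n+1)), ⟨M,A⟩_n := (1/n)Σ_k A(k/(n+1), k/(n+1)) and ⟨W,A⟩_n := (1/n)Σ_k A(k/(n+1), (n+1−k)/(n+1)), one has ⟨W,A⟩_n ≤ ⟨C,A⟩_n ≤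 ⟨M,A⟩_n. -/
open MeasureTheory Set

private noncomputable def tt (n m : ℕ) : ℝ := (m : ℝ) / ((n:ℝ)+1)

private noncomputable def dd (n : ℕ) (A : ℝ → ℝ → ℝ) (i j : ℕ) : ℝ :=
  A (tt n (i+1)) (tt n (j+1)) - A (tt n i) (tt n (j+1))
    - A (tt n (i+1)) (tt n j) + A (tt n i) (tt n j)

private lemma tt_mem {n m : ℕ} (h : m ≤ n+1) : tt n m ∈ Icc (0:ℝ) 1 := by
  unfold tt
  constructor
  · positivity
  · rw [div_le_one (by positivity)]
    exact_mod_cast h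

private lemma tt_mono {n : ℕ} {a b : ℕ} (h : a ≤ b) : tt n a ≤ tt n b := by
  unfold tt
  apply div_le_div_of_nonneg_right ?_ (by positivity)
  · exact_mod_cast h

private lemma dd_nonneg {n : ℕ} {A : ℝ → ℝ → ℝ} (hA : IsCopula A) {i j : ℕ}
    (hi : i < n) (hj : j < n) : 0 ≤ dd n A i j := by
  obtain ⟨-, -, -, -, h5, -⟩ := hA
  have := h5 (tt n i) (tt n (i+1)) (tt n j) (tt n (j+1))
    (tt_mem (by omega)) (tt_mem (by omega)) (tt_mem (by omega)) (tt_mem (by omega))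
    (tt_mono (Nat.le_succ i)) (tt_mono (Nat.le_succ j))
  unfold dd
  linarith

private lemma key1 {n : ℕ} {A : ℝ → ℝ → ℝ} (hA : IsCopula A) {a b : ℕ}
    (ha : a + 1 ≤ n + 1) (hb : b + 1 ≤ n + 1) :
    A (tt n (a+1)) (tt n (b+1))
      = ∑ i ∈ Finset.range (a+1), ∑ j ∈ Finset.range (b+1), dd n A i j := by
  obtain ⟨h1, h2, -, -, -, -⟩ := hA
  have e0 : tt n 0 = 0 := by simp [tt]
  have hsum : ∀ i, i + 1 ≤ n + 1 → ∑ j ∈ Finset.range (b+1), dd n A i j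
      = A (tt n (i+1)) (tt n (b+1)) - A (tt n i) (tt n (b+1)) := by
    intro i hi
    have hF := Finset.sum_range_sub
      (fun j => A (tt n (i+1)) (tt n j) - A (tt n i) (tt n j)) (b+1)
    simp only [e0, h1 _ (tt_mem hi), h1 _ (tt_mem (by omega : i ≤ n + 1))] at hF
    have : ∑ j ∈ Finset.range (b+1), dd n A i j
        = ∑ j ∈ Finset.range (b+1),
            ((fun j => A (tt n (i+1)) (tt n j) - A (tt n i) (tt n j)) (j+1)
             - (fun j => A (tt n (i+1)) (tt n j) - A (tt n i) (tt n j)) j) := by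
      refine Finset.sum_congr rfl fun j _ => ?_
      simp only [dd]; ring
    rw [this, hF]
    ring
  have hG := Finset.sum_range_sub (fun i => A (tt n i) (tt n (b+1))) (a+1)
  simp only [e0, h2 _ (tt_mem hb)] at hG
  rw [Finset.sum_congr rfl fun i hi =>
    hsum i (by simpa [Nat.succ_le_succ_iff, Nat.lt_succ_iff] using
      (Nat.lt_succ_iff.mp (Finset.mem_range.mp hi)).trans (by omega : a ≤ n))]
  rw [hG]
  ring

private def cnt (n : ℕ) (τ : Fin n → Fin n) (i j : ℕ) : ℕ :=
  (Finset.univ.filter fun k : Fin n => i ≤ k.1 ∧ j ≤ (τ k).1).card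

private lemma sum_trunc {n m : ℕ} (h : m < n) (g : ℕ → ℝ) :
    (∑ i ∈ Finset.range n, if i ≤ m then g i else 0) = ∑ i ∈ Finset.range (m+1), g i := by
  rw [← Finset.sum_filter]
  congr 1
  ext x
  simp only [Finset.mem_filter, Finset.mem_range, Nat.lt_succ_iff]
  omega

private lemma sum_ext {n a b : ℕ} (ha : a < n) (hb : b < n) (g : ℕ → ℕ → ℝ) :
    ∑ i ∈ Finset.range (a+1), ∑ j ∈ Finset.range (b+1), g i j
      = ∑ i ∈ Finset.range n, ∑ j ∈ Finset.range n,
          (if i ≤ a ∧ j ≤ b then g i j else 0) := by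
  rw [← sum_trunc ha]
  refine Finset.sum_congr rfl fun i _ => ?_
  by_cases hi : i ≤ a
  · simp only [hi, if_true, true_and]
    rw [← sum_trunc hb]
  · simp [hi]

private lemma master {n : ℕ} {A : ℝ → ℝ → ℝ} (hA : IsCopula A) (τ : Fin n → Fin n) :
    ∑ k : Fin n, A (tt n (k.1+1)) (tt n ((τ k).1+1))
      = ∑ i ∈ Finset.range n, ∑ j ∈ Finset.range n, (cnt n τ i j : ℝ) * dd n A i j := by
  have step1 : ∀ k : Fin n, A (tt n (k.1+1)) (tt n ((τ k).1+1))
      = ∑ i ∈ Finset.range n, ∑ j ∈ Finset.range n,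
          (if i ≤ k.1 ∧ j ≤ (τ k).1 then dd n A i j else 0) := by
    intro k
    rw [key1 hA (Nat.succ_le_succ k.isLt.le) (Nat.succ_le_succ (τ k).isLt.le)]
    exact sum_ext k.isLt (τ k).isLt _
  rw [Finset.sum_congr rfl fun k _ => step1 k]
  rw [Finset.sum_comm]
  refine Finset.sum_congr rfl fun i _ => ?_
  rw [Finset.sum_comm]
  refine Finset.sum_congr rfl fun j _ => ?_
  rw [← Finset.sum_filter, Finset.sum_const, nsmul_eq_mul]
  rfl

private lemma card_filter_fin {n : ℕ} (p : ℕ → Prop) [DecidablePred p] :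
    (Finset.univ.filter fun k : Fin n => p k.1).card = ((Finset.range n).filter p).card := by
  rw [Finset.card_filter, Finset.card_filter,
    Fin.sum_univ_eq_sum_range (fun i => if p i then 1 else 0) n]

private lemma cnt_id {n : ℕ} (i j : ℕ) : cnt n id i j = n - max i j := by
  have : cnt n id i j = (Finset.univ.filter fun k : Fin n => i ≤ k.1 ∧ j ≤ k.1).card := rfl
  rw [this, card_filter_fin (fun k => i ≤ k ∧ j ≤ k)]
  have : (Finset.range n).filter (fun k => i ≤ k ∧ j ≤ k) = Finset.Ico (max i j) n := by
    ext x
    simp only [Finset.mem_filter, Finset.mem_range, Finset.mem_Ico]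
    omega
  rw [this, Nat.card_Ico]

private lemma cnt_rev {n : ℕ} (i j : ℕ) : cnt n Fin.rev i j = n - j - i := by
  have : cnt n Fin.rev i j
      = (Finset.univ.filter fun k : Fin n => i ≤ k.1 ∧ j ≤ n - (k.1 + 1)).card := by
    unfold cnt
    simp only [Fin.val_rev]
  rw [this, card_filter_fin (fun k => i ≤ k ∧ j ≤ n - (k + 1))]
  have : (Finset.range n).filter (fun k => i ≤ k ∧ j ≤ n - (k+1)) = Finset.Ico i (n - j) := by
    ext x
    simp only [Finset.mem_filter, Finset.mem_range, Finset.mem_Ico]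
    omega
  rw [this, Nat.card_Ico]

private lemma card_fix {n : ℕ} (i : ℕ) :
    (Finset.univ.filter fun k : Fin n => i ≤ k.1).card = n - i := by
  rw [card_filter_fin (fun k => i ≤ k)]
  have : (Finset.range n).filter (fun k => i ≤ k) = Finset.Ico i n := by
    ext x
    simp only [Finset.mem_filter, Finset.mem_range, Finset.mem_Ico]
    omega
  rw [this, Nat.card_Ico]

private lemma card_perm {n : ℕ} (σ : Equiv.Perm (Fin n)) (j : ℕ) :
    (Finset.univ.filter fun k : Fin n => j ≤ (σ k).1).card = n - j := by
  rw [← card_fix (n := n) j]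
  apply Finset.card_bij (fun k _ => σ k)
  · intro a ha
    simp only [Finset.mem_filter, Finset.mem_univ, true_and] at *
    exact ha
  · intro a _ b _ h
    exact σ.injective h
  · intro b hb
    simp only [Finset.mem_filter, Finset.mem_univ, true_and] at hb
    exact ⟨σ.symm b, by simp [hb], by simp⟩

private lemma cnt_le_id {n : ℕ} (σ : Equiv.Perm (Fin n)) (i j : ℕ) :
    cnt n (⇑σ) i j ≤ cnt n id i j := by
  rw [cnt_id]
  have h1 : cnt n (⇑σ) i j ≤ n - i := by
    rw [← card_fix (n := n) i]
    apply Finset.card_le_card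
    intro k hk
    simp only [cnt, Finset.mem_filter, Finset.mem_univ, true_and] at *
    exact hk.1
  have h2 : cnt n (⇑σ) i j ≤ n - j := by
    rw [← card_perm σ j]
    apply Finset.card_le_card
    intro k hk
    simp only [cnt, Finset.mem_filter, Finset.mem_univ, true_and] at *
    exact hk.2
  omega

private lemma rev_le_cnt {n : ℕ} (σ : Equiv.Perm (Fin n)) (i j : ℕ) :
    cnt n Fin.rev i j ≤ cnt n (⇑σ) i j := by
  rw [cnt_rev]
  have hinter : (Finset.univ.filter fun k : Fin n => i ≤ k.1)
      ∩ (Finset.univ.filter fun k : Fin n => j ≤ (σ k).1)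
      = Finset.univ.filter fun k : Fin n => i ≤ k.1 ∧ j ≤ (σ k).1 := by
    rw [← Finset.filter_and]
  have hu := Finset.card_union_add_card_inter
    (Finset.univ.filter fun k : Fin n => i ≤ k.1)
    (Finset.univ.filter fun k : Fin n => j ≤ (σ k).1)
  rw [hinter, card_fix, card_perm] at hu
  have hle : ((Finset.univ.filter fun k : Fin n => i ≤ k.1)
      ∪ (Finset.univ.filter fun k : Fin n => j ≤ (σ k).1)).card ≤ n := by
    calc _ ≤ (Finset.univ : Finset (Fin n)).card := Finset.card_le_univ _
      _ = n := by simp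
  unfold cnt
  omega

theorem stmt12 (n : ℕ) (hn : 1 ≤ n) (A : ℝ → ℝ → ℝ) (hA : IsCopula A)
    (σ : Equiv.Perm (Fin n)) :
    (∑ k : Fin n, A (((k.val:ℝ)+1)/((n:ℝ)+1)) (((n:ℝ)+1-((k.val:ℝ)+1))/((n:ℝ)+1)))
      ≤ (∑ k : Fin n, A (((k.val:ℝ)+1)/((n:ℝ)+1)) ((((σ k).val:ℝ)+1)/((n:ℝ)+1))) ∧
    (∑ k : Fin n, A (((k.val:ℝ)+1)/((n:ℝ)+1)) ((((σ k).val:ℝ)+1)/((n:ℝ)+1)))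
      ≤ (∑ k : Fin n, A (((k.val:ℝ)+1)/((n:ℝ)+1)) (((k.val:ℝ)+1)/((n:ℝ)+1))) := by
  have harg : ∀ k : Fin n, (((k.val:ℝ)+1)/((n:ℝ)+1)) = tt n (k.1+1) := by
    intro k
    unfold tt
    push_cast
    ring
  have eσ : (∑ k : Fin n, A (((k.val:ℝ)+1)/((n:ℝ)+1)) ((((σ k).val:ℝ)+1)/((n:ℝ)+1)))
      = ∑ i ∈ Finset.range n, ∑ j ∈ Finset.range n, (cnt n (⇑σ) i j : ℝ) * dd n A i j := by
    rw [← master hA (⇑σ)]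
    refine Finset.sum_congr rfl fun k _ => ?_
    rw [harg k, harg (σ k)]
  have eid : (∑ k : Fin n, A (((k.val:ℝ)+1)/((n:ℝ)+1)) (((k.val:ℝ)+1)/((n:ℝ)+1)))
      = ∑ i ∈ Finset.range n, ∑ j ∈ Finset.range n, (cnt n id i j : ℝ) * dd n A i j := by
    rw [← master hA id]
    refine Finset.sum_congr rfl fun k _ => ?_
    rw [harg k]
    rfl
  have erev : (∑ k : Fin n, A (((k.val:ℝ)+1)/((n:ℝ)+1)) (((n:ℝ)+1-((k.val:ℝ)+1))/((n:ℝ)+1)))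
      = ∑ i ∈ Finset.range n, ∑ j ∈ Finset.range n, (cnt n Fin.rev i j : ℝ) * dd n A i j := by
    rw [← master hA Fin.rev]
    refine Finset.sum_congr rfl fun k _ => ?_
    rw [harg k]
    congr 1
    have hk := k.isLt
    unfold tt
    rw [Fin.val_rev]
    rw [show n - (k.1 + 1) + 1 = n - k.1 by omega, Nat.cast_sub hk.le]
    ring
  constructor
  · rw [erev, eσ]
    refine Finset.sum_le_sum fun i hi => Finset.sum_le_sum fun j hj => ?_
    simp only [Finset.mem_range] at hi hj
    refine mul_le_mul_of_nonneg_right ?_ (dd_nonneg hA hi hj)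
    exact_mod_cast rev_le_cnt σ i j
  · rw [eσ, eid]
    refine Finset.sum_le_sum fun i hi => Finset.sum_le_sum fun j hj => ?_
    simp only [Finset.mem_range] at hi hj
    refine mul_le_mul_of_nonneg_right ?_ (dd_nonneg hA hi hj)
    exact_mod_cast cnt_le_id σ i j
end

section
/- Let n ≥ 1, let A be a Γ-invariant bivariate copula, and let μ be a probability measure on [0,1]² whose distribution function is A. If (1/n)Σ_{k=1}^n A(k/(n+1), k/(n+1)) = 1/4, then μ((1/(n+1), n/(n+1)] × (1/(n+1), n/(n+1)]) = 0. -/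
open MeasureTheory Set

set_option maxHeartbeats 1000000 in
lemma keyE (n : ℕ) (hn : 1 ≤ n) (A : ℝ → ℝ → ℝ) (hA : IsCopula A)
    (hinv : IsGammaInvariant A)
    (hS : ∑ k ∈ Finset.range n,
      A (((k:ℝ)+1)/((n:ℝ)+1)) (((k:ℝ)+1)/((n:ℝ)+1)) = (n:ℝ)/4) :
    A ((n:ℝ)/((n:ℝ)+1)) ((n:ℝ)/((n:ℝ)+1)) - A ((1:ℝ)/((n:ℝ)+1)) ((n:ℝ)/((n:ℝ)+1))
    - A ((n:ℝ)/((n:ℝ)+1)) ((1:ℝ)/((n:ℝ)+1)) + A ((1:ℝ)/((n:ℝ)+1)) ((1:ℝ)/((n:ℝ)+1)) = 0 := by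
  obtain ⟨hA0, h0A, hA1, h1A, h2inc, hbdd⟩ := hA
  set m : ℕ := n + 1 with hm
  set u : ℕ → ℝ := fun i => (i:ℝ) / (m:ℝ) with hu_def
  have hmpos : (0:ℝ) < (m:ℝ) := by positivity
  have hu : ∀ i, i ≤ m → u i ∈ Icc (0:ℝ) 1 := by
    intro i hi
    constructor
    · positivity
    · rw [div_le_one hmpos]; exact_mod_cast hi
  have humono : ∀ i j : ℕ, i ≤ j → u i ≤ u j := by
    intro i j h
    exact (div_le_div_iff_of_pos_right hmpos).2 (by exact_mod_cast h)
  have hu0 : u 0 = 0 := by simp [hu_def]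
  have hum : u m = 1 := by
    simp only [hu_def]; exact div_self (ne_of_gt hmpos)
  -- the cell masses (second differences of A on the grid)
  set g : ℕ → ℕ → ℝ := fun i j =>
    A (u (i+1)) (u (j+1)) - A (u i) (u (j+1)) - A (u (i+1)) (u j) + A (u i) (u j)
      with hg_def
  have hgnonneg : ∀ i j, i < m → j < m → 0 ≤ g i j := by
    intro i j hi hj
    have h := h2inc (u i) (u (i+1)) (u j) (u (j+1)) (hu i (by omega)) (hu (i+1) (by omega))
      (hu j (by omega)) (hu (j+1) (by omega)) (humono i (i+1) (by omega))
      (humono j (j+1) (by omega))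
    simp only [hg_def]; linarith
  -- telescoping
  have tele : ∀ p q, p ≤ m → q ≤ m →
      ∑ i ∈ Finset.range p, ∑ j ∈ Finset.range q, g i j = A (u p) (u q) := by
    intro p q hp hq
    have inner : ∀ i, i < m → ∑ j ∈ Finset.range q, g i j
        = A (u (i+1)) (u q) - A (u i) (u q) := by
      intro i hi
      have := Finset.sum_range_sub (fun j => A (u (i+1)) (u j) - A (u i) (u j)) q
      have h1 : ∑ j ∈ Finset.range q, g i j
          = ∑ j ∈ Finset.range q, ((fun j => A (u (i+1)) (u j) - A (u i) (u j)) (j+1)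
              - (fun j => A (u (i+1)) (u j) - A (u i) (u j)) j) := by
        apply Finset.sum_congr rfl; intro j hj; simp only [hg_def]; ring
      rw [h1, this, hu0, hA0 _ (hu (i+1) (by omega)), hA0 _ (hu i (by omega))]
      ring
    have h2 : ∑ i ∈ Finset.range p, ∑ j ∈ Finset.range q, g i j
        = ∑ i ∈ Finset.range p, ((fun i => A (u i) (u q)) (i+1) - (fun i => A (u i) (u q)) i) := by
      apply Finset.sum_congr rfl; intro i hi
      rw [inner i (by simp at hi; omega)]
    rw [h2, Finset.sum_range_sub (fun i => A (u i) (u q)) p, hu0,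
      h0A _ (hu q hq)]
    ring
  -- symmetry of g
  have gsym : ∀ i j, i ≤ n → j ≤ n → g i j = g j i := by
    intro i j hi hj
    have hs : ∀ a b, a ≤ m → b ≤ m → A (u a) (u b) = A (u b) (u a) := by
      intro a b ha hb
      exact (hinv (u a) (hu a ha) (u b) (hu b hb)).1
    simp only [hg_def]
    rw [hs (i+1) (j+1) (by omega) (by omega), hs i (j+1) (by omega) (by omega),
      hs (i+1) j (by omega) (by omega), hs i j (by omega) (by omega)]
    ring
  -- reflection identity for A on grid points
  have hrefl : ∀ i, i ≤ m → ∀ v ∈ Icc (0:ℝ) 1, A (u i) v = v - A (u (m-i)) v := by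
    intro i hi v hv
    have h1 : (1:ℝ) - u i = u (m - i) := by
      simp only [hu_def]
      rw [Nat.cast_sub hi]
      field_simp
    rw [(hinv (u i) (hu i hi) v hv).2, h1]
  -- reflection invariance of g in the first index
  have grefl : ∀ i j, i ≤ n → j ≤ n → g (n-i) j = g i j := by
    intro i j hi hj
    have e1 : n - i + 1 = m - i := by omega
    have e2 : m - (m - i) = i := by omega
    have e3 : m - (m - (i+1)) = i + 1 := by omega
    have e4 : n - i = m - (i+1) := by omega
    have hv1 := hu (j+1) (by omega)
    have hv0 := hu j (by omega)
    have r1 : ∀ v ∈ Icc (0:ℝ) 1, A (u (n-i+1)) v = v - A (u i) v := by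
      intro v hv
      rw [e1, hrefl (m-i) (by omega) v hv, e2]
    have r2 : ∀ v ∈ Icc (0:ℝ) 1, A (u (n-i)) v = v - A (u (i+1)) v := by
      intro v hv
      rw [e4, hrefl (m-(i+1)) (by omega) v hv, e3]
    simp only [hg_def]
    rw [r1 _ hv1, r1 _ hv0, r2 _ hv1, r2 _ hv0]
    ring
  have grefl2 : ∀ i j, i ≤ n → j ≤ n → g i (n-j) = g i j := by
    intro i j hi hj
    rw [gsym i (n-j) hi (by omega), grefl j i hj hi, gsym j i hj hi]
  -- rewrite the hypothesis sum using u
  have hS' : ∑ k ∈ Finset.range n, A (u (k+1)) (u (k+1)) = (n:ℝ)/4 := by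
    rw [← hS]
    apply Finset.sum_congr rfl
    intro k hk
    have : u (k+1) = ((k:ℝ)+1)/((n:ℝ)+1) := by
      simp only [hu_def, hm]; push_cast; ring
    rw [this]
  have hfilk : ∀ k : ℕ, Finset.filter (fun j => j ≤ k) (Finset.range m)
      = Finset.range (min (k+1) m) := by
    intro k; ext x; simp only [Finset.mem_filter, Finset.mem_range, Finset.mem_range]; omega
  have hw : ∀ k ∈ Finset.range n, A (u (k+1)) (u (k+1)) =
      ∑ i ∈ Finset.range m, ∑ j ∈ Finset.range m,
        (if i ≤ k ∧ j ≤ k then g i j else 0) := by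
    intro k hk
    simp only [Finset.mem_range] at hk
    have hmin : min (k+1) m = k+1 := by omega
    have hfil : Finset.filter (fun j => j ≤ k) (Finset.range m) = Finset.range (k+1) := by
      rw [hfilk k, hmin]
    have step1 : ∀ i : ℕ, (∑ j ∈ Finset.range m, if i ≤ k ∧ j ≤ k then g i j else 0)
        = if i ≤ k then ∑ j ∈ Finset.range (k+1), g i j else 0 := by
      intro i
      by_cases h : i ≤ k
      · simp only [h, true_and, if_true]
        rw [← hfil, Finset.sum_filter]
      · simp [h]
    rw [← tele (k+1) (k+1) (by omega) (by omega)]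
    calc ∑ i ∈ Finset.range (k+1), ∑ j ∈ Finset.range (k+1), g i j
        = ∑ i ∈ Finset.range m, (if i ≤ k then ∑ j ∈ Finset.range (k+1), g i j else 0) := by
          rw [← Finset.sum_filter, hfil]
      _ = ∑ i ∈ Finset.range m, ∑ j ∈ Finset.range m,
            (if i ≤ k ∧ j ≤ k then g i j else 0) :=
          Finset.sum_congr rfl fun i _ => (step1 i).symm
  -- the weighted-sum identity
  have key1 : ∑ i ∈ Finset.range m, ∑ j ∈ Finset.range m,
      ((n - max i j : ℕ):ℝ) * g i j = (n:ℝ)/4 := by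
    have e1 : ∑ k ∈ Finset.range n, A (u (k+1)) (u (k+1))
        = ∑ k ∈ Finset.range n, ∑ i ∈ Finset.range m, ∑ j ∈ Finset.range m,
            (if i ≤ k ∧ j ≤ k then g i j else 0) := Finset.sum_congr rfl hw
    rw [e1] at hS'
    rw [Finset.sum_comm] at hS'
    have e2 : ∀ i ∈ Finset.range m, ∑ k ∈ Finset.range n, ∑ j ∈ Finset.range m,
        (if i ≤ k ∧ j ≤ k then g i j else 0)
        = ∑ j ∈ Finset.range m, ((n - max i j : ℕ):ℝ) * g i j := by
      intro i _
      rw [Finset.sum_comm]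
      apply Finset.sum_congr rfl
      intro j _
      have hfil3 : Finset.filter (fun k => i ≤ k ∧ j ≤ k) (Finset.range n)
          = Finset.Ico (max i j) n := by
        ext x; simp only [Finset.mem_filter, Finset.mem_range, Finset.mem_Ico]; omega
      rw [← Finset.sum_filter, hfil3, Finset.sum_const, Nat.card_Ico, nsmul_eq_mul]
    rw [Finset.sum_congr rfl e2] at hS'
    exact hS'
  -- reflections
  have hrow : ∀ (wf : ℕ → ℝ) (i : ℕ), i < m →
      ∑ j ∈ Finset.range m, wf j * g i j = ∑ j ∈ Finset.range m, wf (n-j) * g i j := by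
    intro wf i hi
    have := Finset.sum_range_reflect (fun j => wf j * g i j) m
    rw [← this]
    apply Finset.sum_congr rfl
    intro j hj
    simp only [Finset.mem_range] at hj
    have e : m - 1 - j = n - j := by omega
    rw [e, grefl2 i j (by omega) (by omega)]
  have hcol : ∀ (wf : ℕ → ℕ → ℝ),
      (∑ i ∈ Finset.range m, ∑ j ∈ Finset.range m, wf i j * g i j)
      = ∑ i ∈ Finset.range m, ∑ j ∈ Finset.range m, wf (n-i) j * g i j := by
    intro wf
    have := Finset.sum_range_reflect
      (fun i => ∑ j ∈ Finset.range m, wf i j * g i j) m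
    rw [← this]
    apply Finset.sum_congr rfl
    intro i hi
    simp only [Finset.mem_range] at hi
    have e : m - 1 - i = n - i := by omega
    rw [e]
    apply Finset.sum_congr rfl
    intro j hj
    simp only [Finset.mem_range] at hj
    rw [grefl i j (by omega) (by omega)]
  have key2 : ∑ i ∈ Finset.range m, ∑ j ∈ Finset.range m,
      ((n - max (n-i) j : ℕ):ℝ) * g i j = (n:ℝ)/4 := by
    rw [← hcol (fun i j => ((n - max i j : ℕ):ℝ))]; exact key1
  have key3 : ∑ i ∈ Finset.range m, ∑ j ∈ Finset.range m,
      ((n - max i (n-j) : ℕ):ℝ) * g i j = (n:ℝ)/4 := by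
    rw [← key1]
    apply Finset.sum_congr rfl
    intro i hi
    simp only [Finset.mem_range] at hi
    exact (hrow (fun j => ((n - max i j : ℕ):ℝ)) i hi).symm
  have key4 : ∑ i ∈ Finset.range m, ∑ j ∈ Finset.range m,
      ((n - max (n-i) (n-j) : ℕ):ℝ) * g i j = (n:ℝ)/4 := by
    rw [← key2]
    apply Finset.sum_congr rfl
    intro i hi
    simp only [Finset.mem_range] at hi
    exact (hrow (fun j => ((n - max (n-i) j : ℕ):ℝ)) i hi).symm
  have keysum : ∑ i ∈ Finset.range m, ∑ j ∈ Finset.range m,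
      (((n - max i j : ℕ):ℝ) + ((n - max (n-i) j : ℕ):ℝ)
        + ((n - max i (n-j) : ℕ):ℝ) + ((n - max (n-i) (n-j) : ℕ):ℝ)) * g i j = (n:ℝ) := by
    simp only [add_mul, Finset.sum_add_distrib]
    rw [key1, key2, key3, key4]; ring
  -- total mass
  have htot : ∑ i ∈ Finset.range m, ∑ j ∈ Finset.range m, g i j = 1 := by
    rw [tele m m le_rfl le_rfl, hum]
    exact hA1 1 ⟨by norm_num, le_rfl⟩
  -- middle mass
  set E : ℝ := ∑ i ∈ Finset.Ico 1 n, ∑ j ∈ Finset.Ico 1 n, g i j with hE_def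
  have hEnonneg : 0 ≤ E := by
    apply Finset.sum_nonneg
    intro i hi
    apply Finset.sum_nonneg
    intro j hj
    simp only [Finset.mem_Ico] at hi hj
    exact hgnonneg i j (by omega) (by omega)
  have hfil2 : Finset.filter (fun i => 1 ≤ i ∧ i < n) (Finset.range m)
      = Finset.Ico 1 n := by
    ext x; simp only [Finset.mem_filter, Finset.mem_range, Finset.mem_Ico]; omega
  have hite : ∑ i ∈ Finset.range m, ∑ j ∈ Finset.range m,
      (if (1 ≤ i ∧ i < n) ∧ (1 ≤ j ∧ j < n) then 2 * g i j else 0) = 2 * E := by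
    have step1 : ∀ i : ℕ, (∑ j ∈ Finset.range m,
        if (1 ≤ i ∧ i < n) ∧ (1 ≤ j ∧ j < n) then 2 * g i j else 0)
        = if 1 ≤ i ∧ i < n then ∑ j ∈ Finset.Ico 1 n, 2 * g i j else 0 := by
      intro i
      by_cases h : 1 ≤ i ∧ i < n
      · simp only [h, true_and, if_true]
        rw [← hfil2, Finset.sum_filter]
      · simp [h]
    rw [Finset.sum_congr rfl (fun i _ => step1 i), ← Finset.sum_filter, hfil2,
      hE_def, Finset.mul_sum]
    apply Finset.sum_congr rfl
    intro i _
    rw [Finset.mul_sum]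
  -- comparison
  have hboundsum : ∑ i ∈ Finset.range m, ∑ j ∈ Finset.range m,
      ((n:ℝ) * g i j + (if (1 ≤ i ∧ i < n) ∧ (1 ≤ j ∧ j < n) then 2 * g i j else 0))
      ≤ (n:ℝ) := by
    rw [← keysum]
    apply Finset.sum_le_sum
    intro i hi
    apply Finset.sum_le_sum
    intro j hj
    simp only [Finset.mem_range] at hi hj
    have hg := hgnonneg i j hi hj
    by_cases hc : (1 ≤ i ∧ i < n) ∧ (1 ≤ j ∧ j < n)
    · rw [if_pos hc]
      have hnat : n + 2 ≤ (n - max i j) + ((n - max (n-i) j)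
          + ((n - max i (n-j)) + (n - max (n-i) (n-j)))) := by omega
      have hcast : (n:ℝ) + 2 ≤ ((n - max i j : ℕ):ℝ) + ((n - max (n-i) j : ℕ):ℝ)
          + ((n - max i (n-j) : ℕ):ℝ) + ((n - max (n-i) (n-j) : ℕ):ℝ) := by
        have := (Nat.cast_le (α := ℝ)).2 hnat
        push_cast at this
        linarith
      have h2 := mul_le_mul_of_nonneg_right hcast hg
      nlinarith [h2]
    · rw [if_neg hc, add_zero]
      have hnat : n ≤ (n - max i j) + ((n - max (n-i) j)
          + ((n - max i (n-j)) + (n - max (n-i) (n-j)))) := by omega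
      have hcast : (n:ℝ) ≤ ((n - max i j : ℕ):ℝ) + ((n - max (n-i) j : ℕ):ℝ)
          + ((n - max i (n-j) : ℕ):ℝ) + ((n - max (n-i) (n-j) : ℕ):ℝ) := by
        have := (Nat.cast_le (α := ℝ)).2 hnat
        push_cast at this
        linarith
      have h2 := mul_le_mul_of_nonneg_right hcast hg
      nlinarith [h2]
  have hsplit : ∑ i ∈ Finset.range m, ∑ j ∈ Finset.range m,
      ((n:ℝ) * g i j + (if (1 ≤ i ∧ i < n) ∧ (1 ≤ j ∧ j < n) then 2 * g i j else 0))
      = (n:ℝ) * 1 + 2 * E := by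
    simp only [Finset.sum_add_distrib]
    rw [hite]
    congr 1
    simp only [← Finset.mul_sum]
    rw [htot]
  have hE0 : E = 0 := by
    rw [hsplit] at hboundsum
    linarith
  -- identify E with the corner expression
  have hE2 : E = A (u n) (u n) - A (u 1) (u n) - A (u n) (u 1) + A (u 1) (u 1) := by
    have hsub : ∀ i : ℕ, ∑ j ∈ Finset.Ico 1 n, g i j
        = ∑ j ∈ Finset.range n, g i j - ∑ j ∈ Finset.range 1, g i j :=
      fun i => Finset.sum_Ico_eq_sub _ hn
    calc E = ∑ i ∈ Finset.Ico 1 n,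
          (∑ j ∈ Finset.range n, g i j - ∑ j ∈ Finset.range 1, g i j) :=
        Finset.sum_congr rfl fun i _ => hsub i
      _ = ∑ i ∈ Finset.Ico 1 n, ∑ j ∈ Finset.range n, g i j
          - ∑ i ∈ Finset.Ico 1 n, ∑ j ∈ Finset.range 1, g i j := by
        rw [Finset.sum_sub_distrib]
      _ = (∑ i ∈ Finset.range n, ∑ j ∈ Finset.range n, g i j
          - ∑ i ∈ Finset.range 1, ∑ j ∈ Finset.range n, g i j)
          - (∑ i ∈ Finset.range n, ∑ j ∈ Finset.range 1, g i j
          - ∑ i ∈ Finset.range 1, ∑ j ∈ Finset.range 1, g i j) := by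
        rw [Finset.sum_Ico_eq_sub _ hn, Finset.sum_Ico_eq_sub _ hn]
      _ = A (u n) (u n) - A (u 1) (u n) - A (u n) (u 1) + A (u 1) (u 1) := by
        rw [tele n n (by omega) (by omega), tele 1 n (by omega) (by omega),
          tele n 1 (by omega) (by omega), tele 1 1 (by omega) (by omega)]
        ring
  have hun : u n = (n:ℝ)/((n:ℝ)+1) := by simp only [hu_def, hm]; push_cast; ring
  have hu1 : u 1 = (1:ℝ)/((n:ℝ)+1) := by simp only [hu_def, hm]; push_cast; ring
  rw [← hun, ← hu1]
  linarith [hE2, hE0]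

theorem stmt14 (n : ℕ) (hn : 1 ≤ n) (A : ℝ → ℝ → ℝ) (hA : IsCopula A)
    (hinv : IsGammaInvariant A)
    (μ : MeasureTheory.Measure (ℝ × ℝ))
    (hμ : MeasureTheory.IsProbabilityMeasure μ) (hdist : IsDistributionOf μ A)
    (hM : (1/(n:ℝ)) * (∑ k : Fin n,
      A (((k.val:ℝ)+1)/((n:ℝ)+1)) (((k.val:ℝ)+1)/((n:ℝ)+1))) = 1/4) :
    μ (Ioc ((1:ℝ)/((n:ℝ)+1)) ((n:ℝ)/((n:ℝ)+1)) ×ˢ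
        Ioc ((1:ℝ)/((n:ℝ)+1)) ((n:ℝ)/((n:ℝ)+1))) = 0 := by
  have hnR : (0:ℝ) < (n:ℝ) := by exact_mod_cast hn
  -- convert hM to the range-sum hypothesis of keyE
  have hS : ∑ k ∈ Finset.range n,
      A (((k:ℝ)+1)/((n:ℝ)+1)) (((k:ℝ)+1)/((n:ℝ)+1)) = (n:ℝ)/4 := by
    rw [← Fin.sum_univ_eq_sum_range]
    field_simp at hM
    linarith [hM]
  have hE := keyE n hn A hA hinv hS
  set a : ℝ := (1:ℝ)/((n:ℝ)+1) with ha_def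
  set b : ℝ := (n:ℝ)/((n:ℝ)+1) with hb_def
  have hden : (0:ℝ) < (n:ℝ)+1 := by linarith
  have ha0 : 0 ≤ a := by positivity
  have hab : a ≤ b := by
    rw [ha_def, hb_def, div_le_div_iff₀ hden hden]
    have h1n : (1:ℝ) ≤ (n:ℝ) := by exact_mod_cast hn
    nlinarith [h1n, hden]
  have hb1 : b ≤ 1 := by
    rw [hb_def, div_le_one hden]; linarith
  have ha1 : a ≤ 1 := le_trans hab hb1
  have hamem : a ∈ Icc (0:ℝ) 1 := ⟨ha0, ha1⟩
  have hbmem : b ∈ Icc (0:ℝ) 1 := ⟨le_trans ha0 hab, hb1⟩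
  -- A-values are nonneg
  have hAnn : ∀ x ∈ Icc (0:ℝ) 1, ∀ y ∈ Icc (0:ℝ) 1, 0 ≤ A x y := by
    intro x hx y hy; exact (hA.2.2.2.2.2 x hx y hy).1
  -- measure splittings
  have hdisj : Disjoint (Icc 0 a) (Ioc a b) := by
    rw [Set.disjoint_left]
    rintro x ⟨_, hxa⟩ ⟨hax, _⟩
    exact absurd hxa (not_le.2 hax)
  have hIcc : Icc (0:ℝ) a ∪ Ioc a b = Icc 0 b := Icc_union_Ioc_eq_Icc ha0 hab
  have hmIcc : ∀ t : Set ℝ, MeasurableSet t →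
      μ ((Icc 0 a ∪ Ioc a b) ×ˢ t) = μ (Icc 0 a ×ˢ t) + μ (Ioc a b ×ˢ t) := by
    intro t ht
    rw [Set.union_prod]
    exact measure_union (Disjoint.set_prod_left hdisj _ _)
      ((measurableSet_Ioc).prod ht)
  have hmIcc2 : ∀ s : Set ℝ, MeasurableSet s →
      μ (s ×ˢ (Icc 0 a ∪ Ioc a b)) = μ (s ×ˢ Icc 0 a) + μ (s ×ˢ Ioc a b) := by
    intro s hs
    rw [Set.prod_union]
    exact measure_union (Disjoint.set_prod_right hdisj _ _)
      (hs.prod measurableSet_Ioc)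
  -- the four pieces
  have eqbb : μ (Icc 0 b ×ˢ Icc 0 b)
      = μ (Icc 0 a ×ˢ Icc 0 a) + μ (Icc 0 a ×ˢ Ioc a b)
        + (μ (Ioc a b ×ˢ Icc 0 a) + μ (Ioc a b ×ˢ Ioc a b)) := by
    rw [← hIcc, hmIcc _ (hIcc ▸ (measurableSet_Icc : MeasurableSet (Icc (0:ℝ) b))),
      hmIcc2 _ measurableSet_Icc, hmIcc2 _ measurableSet_Ioc]
  have eqba : μ (Icc 0 b ×ˢ Icc 0 a)
      = μ (Icc 0 a ×ˢ Icc 0 a) + μ (Ioc a b ×ˢ Icc 0 a) := by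
    rw [← hIcc, hmIcc _ measurableSet_Icc]
  have eqab : μ (Icc 0 a ×ˢ Icc 0 b)
      = μ (Icc 0 a ×ˢ Icc 0 a) + μ (Icc 0 a ×ˢ Ioc a b) := by
    rw [← hIcc, hmIcc2 _ measurableSet_Icc]
  -- pass to real numbers
  have hfin : ∀ s : Set (ℝ × ℝ), μ s ≠ ⊤ := fun s => measure_ne_top μ s
  have taa : (μ (Icc 0 a ×ˢ Icc 0 a)).toReal = A a a := by
    rw [hdist a hamem a hamem]; exact ENNReal.toReal_ofReal (hAnn a hamem a hamem)
  have tba : (μ (Icc 0 b ×ˢ Icc 0 a)).toReal = A b a := by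
    rw [hdist b hbmem a hamem]; exact ENNReal.toReal_ofReal (hAnn b hbmem a hamem)
  have tab : (μ (Icc 0 a ×ˢ Icc 0 b)).toReal = A a b := by
    rw [hdist a hamem b hbmem]; exact ENNReal.toReal_ofReal (hAnn a hamem b hbmem)
  have tbb : (μ (Icc 0 b ×ˢ Icc 0 b)).toReal = A b b := by
    rw [hdist b hbmem b hbmem]; exact ENNReal.toReal_ofReal (hAnn b hbmem b hbmem)
  have rba : A b a = (μ (Icc 0 a ×ˢ Icc 0 a)).toReal + (μ (Ioc a b ×ˢ Icc 0 a)).toReal := by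
    rw [← tba, eqba, ENNReal.toReal_add (hfin _) (hfin _)]
  have rab : A a b = (μ (Icc 0 a ×ˢ Icc 0 a)).toReal + (μ (Icc 0 a ×ˢ Ioc a b)).toReal := by
    rw [← tab, eqab, ENNReal.toReal_add (hfin _) (hfin _)]
  have rbb : A b b = (μ (Icc 0 a ×ˢ Icc 0 a)).toReal + (μ (Icc 0 a ×ˢ Ioc a b)).toReal
      + ((μ (Ioc a b ×ˢ Icc 0 a)).toReal + (μ (Ioc a b ×ˢ Ioc a b)).toReal) := by
    rw [← tbb, eqbb,
      ENNReal.toReal_add (ENNReal.add_ne_top.2 ⟨hfin _, hfin _⟩)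
        (ENNReal.add_ne_top.2 ⟨hfin _, hfin _⟩),
      ENNReal.toReal_add (hfin _) (hfin _), ENNReal.toReal_add (hfin _) (hfin _)]
  have hq : (μ (Ioc a b ×ˢ Ioc a b)).toReal = 0 := by
    rw [← taa] at hE
    linarith [hE, rba, rab, rbb]
  have := (ENNReal.toReal_eq_zero_iff _).1 hq
  rcases this with h | h
  · exact h
  · exact absurd h (hfin _)
end
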